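/- arXiv:1504.07813 — 3 statements merged into one kernel-verified Lean document; each statement's English description precedes it below -/
import Mathlib

section
/- Assume m′+d > r. For every path p ∈ X_d(m,m′): Q(p) = ∏_{i=1}^{d} ( ∏_{s=1}^{δ_i} C̄(m−l^{(s)}_i, k^{(s)}_i) ) · ( ∏_{s=δ_i+1}^{m−m′} C(m−l^{(s)}_i, |k^{(s)}_i| − 1) ). -/
noncomputable section
open Matrix BigOperators

namespace CTypeMinors

/-- Standard basis vector of `ℂ^{2r}`, indexed by a natural number `a` (0-indexed):
`a = j - 1` encodes the unbarred element `j ∈ J`, and `a = 2r - j` encodes the barred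
element `j̄ ∈ J` (this is the bijection `ι` shifted to be 0-indexed; the natural order
on `{0, …, 2r-1}` corresponds to the total order on `J`). -/
def vv (r a : ℕ) : Fin (2*r) → ℂ := fun k => if (k : ℕ) = a then 1 else 0

/-- `v_j` for unbarred `j` (`1 ≤ j ≤ r`); note `vu r (r+1) = v_{r̄}`. -/
def vu (r j : ℕ) : Fin (2*r) → ℂ := vv r (j - 1)

/-- `v_{j̄}` for barred `j̄` (`1 ≤ j ≤ r`). -/
def vb (r j : ℕ) : Fin (2*r) → ℂ := vv r (2*r - j)

/-- The matrix `f_i` (`1 ≤ i ≤ r`): `f_i v_i = v_{i+1}`, `f_i v_{(i+1)‾} = v_{ī}`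
(for `i = r` these two conditions both read `f_r v_r = v_{r̄}`), all other basis
vectors are sent to `0`. -/
def fMat (r i : ℕ) : Matrix (Fin (2*r)) (Fin (2*r)) ℂ :=
  Matrix.of fun k l =>
    if ((l : ℕ) + 1 = i ∧ (k : ℕ) = i) ∨ ((l : ℕ) + i + 1 = 2*r ∧ (k : ℕ) + i = 2*r)
    then 1 else 0

/-- `e_i = f_iᵀ`. -/
def eMat (r i : ℕ) : Matrix (Fin (2*r)) (Fin (2*r)) ℂ := (fMat r i)ᵀ

/-- `x_i(t) = 1 + t e_i`. -/
def xMat (r i : ℕ) (t : ℂ) : Matrix (Fin (2*r)) (Fin (2*r)) ℂ := 1 + t • eMat r i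

/-- `y_i(t) = 1 + t f_i`. -/
def yMat (r i : ℕ) (t : ℂ) : Matrix (Fin (2*r)) (Fin (2*r)) ℂ := 1 + t • fMat r i

/-- `α_i^∨(c)`: diagonal, acting by `c` on `v_i, v_{(i+1)‾}`, by `c⁻¹` on
`v_{i+1}, v_{ī}`, and by `1` elsewhere (for `i = r`: by `c` on `v_r`, `c⁻¹` on `v_{r̄}`). -/
def alMat (r i : ℕ) (c : ℂ) : Matrix (Fin (2*r)) (Fin (2*r)) ℂ :=
  Matrix.diagonal fun k =>
    if (k : ℕ) + 1 = i ∨ (k : ℕ) + i + 1 = 2*r then c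
    else if (k : ℕ) = i ∨ (k : ℕ) + i = 2*r then c⁻¹
    else 1

/-- `x_{-i}(t) = y_i(t) ⬝ α_i^∨(t⁻¹)`. -/
def xmMat (r i : ℕ) (t : ℂ) : Matrix (Fin (2*r)) (Fin (2*r)) ℂ :=
  yMat r i t * alMat r i t⁻¹

/-- Entry of a `2r × 2r` matrix at (0-indexed) natural number indices. -/
def ent {r : ℕ} (X : Matrix (Fin (2*r)) (Fin (2*r)) ℂ) (a b : ℕ) : ℂ :=
  dotProduct (vv r a) (X.mulVec (vv r b))

/-- Ordered product `g 1 * g 2 * ⋯ * g n` of matrices. -/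
def oprod {N : ℕ} (g : ℕ → Matrix (Fin N) (Fin N) ℂ) (n : ℕ) : Matrix (Fin N) (Fin N) ℂ :=
  ((List.range n).map fun l => g (l + 1)).prod

/-- `x^L(Y) = (x_{-1}(Y_{1,1})⋯x_{-r}(Y_{1,r})) ⋯ x_{-1}(Y_{m,1})⋯x_{-d}(Y_{m,d})`. -/
def xL (r m d : ℕ) (Y : ℕ → ℕ → ℂ) : Matrix (Fin (2*r)) (Fin (2*r)) ℂ :=
  oprod (fun s => oprod (fun l => xmMat r l (Y s l)) (if s = m then d else r)) m

/-- The 0-indexed row `ι(R_i)` for `i : Fin d` (0-indexed `i`): the `i`-th entry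
of `R` is `v_{m'+1+i}` when `(i+1) + m' ≤ r` and `v_{(d-i)‾}` otherwise. -/
def rowR (r m' d i : ℕ) : ℕ := if i + 1 + m' ≤ r then m' + i else 2*r + i - d

/-- `Δ^L(Y)`: determinant of the `d × d` submatrix of `x^L(Y)` with rows `ι(R)` and
columns `1, …, d`. -/
def DeltaL (r m m' d : ℕ) (Y : ℕ → ℕ → ℂ) : ℂ :=
  (Matrix.of fun i j : Fin d => ent (xL r m d Y) (rowR r m' d (i : ℕ)) (j : ℕ)).det

/-- `C̄(l,k) = Y_{l,k-1}/Y_{l,k}`. -/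
def Cbar (Y : ℕ → ℕ → ℂ) (l k : ℕ) : ℂ := Y l (k - 1) / Y l k

/-- `C(l,k) = Y_{l,k+1}/Y_{l+1,k}`. -/
def Cc (Y : ℕ → ℕ → ℂ) (l k : ℕ) : ℂ := Y l (k + 1) / Y (l + 1) k

/-- `|·| : J → ℕ` in the 0-indexed natural encoding of `J`. -/
def absV (r p : ℕ) : ℕ := if p < r then p + 1 else 2*r - p


/-- `A` encodes a path `p ∈ X_d(m,m')` (Definition 6.2): `A s i` (for `0 ≤ s ≤ m`,
`1 ≤ i ≤ d`) is the 0-indexed natural encoding of `a^{(s)}_i ∈ J` (unbarred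
`j ↦ j - 1`, barred `j̄ ↦ 2r - j`; the order of `J` is the natural order, and an
element is barred iff its encoding is `≥ r`).  The five clauses are conditions
(i)+(ii), (iii), (iv) (twice) and (v) of Definition 6.2. -/
def IsPath (r m m' d : ℕ) (A : ℕ → ℕ → ℕ) : Prop :=
  (∀ s, s ≤ m → ∀ i, 1 ≤ i → i ≤ d → A s i < 2*r) ∧
  (∀ s, s ≤ m → ∀ i, 1 ≤ i → i < d → A s i < A s (i+1)) ∧
  (∀ s, s < m → ∀ i, 1 ≤ i → i ≤ d →
      (A s i + 1 < r → (A (s+1) i = A s i ∨ A (s+1) i = A s i + 1)) ∧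
      A s i ≤ A (s+1) i) ∧
  (∀ i, 1 ≤ i → i ≤ d → A 0 i = i - 1 ∧ A m i = rowR r m' d (i - 1)) ∧
  (∀ s, s < m → ∀ i, 1 ≤ i → i < d → r ≤ A (s+1) i →
      absV r (A s (i+1)) < absV r (A (s+1) i))

/-- The set `{l^{(1)}_i, …, l^{(m-m')}_i}` attached to (the `i`-th sequence of) a
path, as in (6.11), (6.12). -/
def lSet (r m m' : ℕ) (A : ℕ → ℕ → ℕ) (i : ℕ) : Finset ℕ :=
  if i + m' ≤ r then (Finset.range m).filter (fun s => A s i = A (s+1) i)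
  else (Finset.range (m + r + 1 - (i + m'))).filter
         (fun s => (A s i < r ∧ A s i = A (s+1) i) ∨ r ≤ A s i)

/-- `l^{(s)}_i` (for `1 ≤ s ≤ m-m'`): the `s`-th smallest element of `lSet`. -/
def lv (r m m' : ℕ) (A : ℕ → ℕ → ℕ) (i s : ℕ) : ℕ :=
  ((lSet r m m' A i).sort (· ≤ ·)).getD (s - 1) 0

/-- `k^{(s)}_i := a^{(l^{(s)}_i)}_i`. -/
def kv (r m m' : ℕ) (A : ℕ → ℕ → ℕ) (i s : ℕ) : ℕ := A (lv r m m' A i s) i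

/-- `δ_i`: the number of `s ∈ {1, …, m-m'}` with `k^{(s)}_i` unbarred. -/
def dv (r m m' : ℕ) (A : ℕ → ℕ → ℕ) (i : ℕ) : ℕ :=
  ((Finset.Icc 1 (m - m')).filter (fun s => kv r m m' A i s < r)).card

/-- The label `Q(p) = ∏_{s=0}^{m-1} Q^{(s)}(p)` of a path (Definition 6.4), for
paths encoded by `A : ℕ → ℕ → ℕ` (1-indexed `i`).  The three branches are the
per-entry factors of `Q^{(s)}(p)`: unbarred-to-unbarred `Y_{m-s,a^{(s+1)}_i-1}/Y_{m-s,a^{(s)}_i}`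
(covering also `Y* = Y_{m-s,r-1}/Y_{m-s,r}`), the factor `Y* = 1/Y_{m-s,|a^{(s+1)}_i|-1}`
(only possible when `a^{(s)}_i = r`), and the barred factor
`Y_{m-s,|a^{(s)}_i|}/Y_{m-s,|a^{(s+1)}_i|-1}`. -/
def QpathN (r m d : ℕ) (Y : ℕ → ℕ → ℂ) (A : ℕ → ℕ → ℕ) : ℂ :=
  ∏ s ∈ Finset.range m, ∏ i ∈ Finset.Icc 1 d,
    (if A s i < r
     then (if A (s+1) i < r
           then Y (m - s) (A (s+1) i) / Y (m - s) (A s i + 1)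
           else 1 / Y (m - s) (2*r - A (s+1) i - 1))
     else Y (m - s) (2*r - A s i) / Y (m - s) (2*r - A (s+1) i - 1))


lemma prodIccDiv (g : ℕ → ℂ) (n : ℕ) (h : ∀ j, 1 ≤ j → j ≤ n + 1 → g j ≠ 0) :
    ∏ x ∈ Finset.Icc 1 n, g x / g (x+1) = g 1 / g (n+1) := by
  induction n with
  | zero => simp [div_self (h 1 le_rfl le_rfl)]
  | succ n ih =>
    rw [Finset.prod_Icc_succ_top (by omega), ih (fun j h1 h2 => h j h1 (by omega)),
      div_mul_div_cancel₀ (h (n+1) (by omega) (by omega))]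

lemma filter_downward (n : ℕ) (P : ℕ → Prop) [DecidablePred P]
    (h : ∀ s s', 1 ≤ s' → s' ≤ s → s ≤ n → P s → P s') :
    (Finset.Icc 1 n).filter P = Finset.Icc 1 (((Finset.Icc 1 n).filter P).card) := by
  set F := (Finset.Icc 1 n).filter P with hF
  rcases F.eq_empty_or_nonempty with he | hne
  · rw [he]; simp
  · have hmax := F.max'_mem hne
    have hmax' : (1 ≤ F.max' hne ∧ F.max' hne ≤ n) ∧ P (F.max' hne) := by
      simpa only [hF, Finset.mem_filter, Finset.mem_Icc] using hmax
    have hsub : F = Finset.Icc 1 (F.max' hne) := by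
      apply Finset.Subset.antisymm
      · intro x hx
        have hx' : (1 ≤ x ∧ x ≤ n) ∧ P x := by
          simpa only [hF, Finset.mem_filter, Finset.mem_Icc] using hx
        exact Finset.mem_Icc.mpr ⟨hx'.1.1, F.le_max' x hx⟩
      · intro x hx
        rw [Finset.mem_Icc] at hx
        refine Finset.mem_filter.mpr ⟨Finset.mem_Icc.mpr ⟨hx.1, le_trans hx.2 hmax'.1.2⟩, ?_⟩
        exact h (F.max' hne) x hx.1 hx.2 hmax'.1.2 hmax'.2
    have hcard : F.card = F.max' hne := by
      have := congrArg Finset.card hsub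
      rw [Nat.card_Icc] at this; omega
    rw [hcard]; exact hsub

lemma prod_sorted_enum (S : Finset ℕ) (n : ℕ) (hcard : S.card = n) (f : ℕ → ℂ) :
    ∏ s ∈ Finset.Icc 1 n, f ((S.sort (· ≤ ·)).getD (s-1) 0) = ∏ l ∈ S, f l := by
  have hlen : (S.sort (· ≤ ·)).length = n := by rw [Finset.length_sort, hcard]
  rw [show Finset.Icc 1 n = Finset.map ⟨Nat.succ, Nat.succ_injective⟩ (Finset.range n) by
    ext x; simp only [Finset.mem_Icc, Finset.mem_map, Finset.mem_range,
      Function.Embedding.coeFn_mk]; constructor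
    · rintro ⟨h1, h2⟩; exact ⟨x - 1, by omega, by omega⟩
    · rintro ⟨a, ha, rfl⟩; omega]
  rw [Finset.prod_map]
  simp only [Function.Embedding.coeFn_mk, Nat.succ_sub_one]
  apply Finset.prod_bij (fun j _ => (S.sort (· ≤ ·)).getD j 0)
  · intro j hj
    have hj' : j < (S.sort (· ≤ ·)).length := hlen ▸ Finset.mem_range.mp hj
    rw [List.getD_eq_getElem _ _ hj']
    rw [← Finset.mem_sort (α := ℕ) (· ≤ ·)]
    exact List.getElem_mem _
  · intro j1 h1 j2 h2 heq
    have h1' : j1 < (S.sort (· ≤ ·)).length := hlen ▸ Finset.mem_range.mp h1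
    have h2' : j2 < (S.sort (· ≤ ·)).length := hlen ▸ Finset.mem_range.mp h2
    rw [List.getD_eq_getElem _ _ h1', List.getD_eq_getElem _ _ h2'] at heq
    exact (List.Nodup.getElem_inj_iff (S.sort_nodup (· ≤ ·))).mp heq
  · intro l hl
    rw [← Finset.mem_sort (α := ℕ) (· ≤ ·)] at hl
    obtain ⟨j, hj, hjl⟩ := List.getElem_of_mem hl
    exact ⟨j, Finset.mem_range.mpr (hlen ▸ hj), by rw [List.getD_eq_getElem _ _ hj, hjl]⟩
  · intros; rfl

-- counting stationary steps
lemma card_stationary (c : ℕ → ℕ) (a b : ℕ) (hab : a ≤ b)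
    (hstep : ∀ s, a ≤ s → s < b → c s ≤ c (s+1) ∧ c (s+1) ≤ c s + 1) :
    ((Finset.Ico a b).filter (fun s => c s = c (s+1))).card + c b = (b - a) + c a := by
  induction b, hab using Nat.le_induction with
  | base => simp
  | succ b hab ih =>
    rw [Nat.Ico_succ_right_eq_insert_Ico hab, Finset.filter_insert]
    have hb := hstep b hab (by omega)
    have ih' := ih (fun s h1 h2 => hstep s h1 (by omega))
    by_cases hc : c b = c (b+1)
    · rw [if_pos hc, Finset.card_insert_of_notMem (by simp)]
      omega
    · rw [if_neg hc]; omega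

section PathLemmas
variable {r m m' d : ℕ} {A : ℕ → ℕ → ℕ}

lemma path_mono (hA : IsPath r m m' d A) {i : ℕ} (hi1 : 1 ≤ i) (hid : i ≤ d)
    {s s' : ℕ} (hss : s ≤ s') (hsm : s' ≤ m) : A s i ≤ A s' i := by
  induction s', hss using Nat.le_induction with
  | base => exact le_rfl
  | succ s' hss ih =>
    exact le_trans (ih (by omega)) (hA.2.2.1 s' (by omega) i hi1 hid).2

lemma path_climb (hA : IsPath r m m' d A) {i : ℕ} (hi1 : 1 ≤ i) (hid : i ≤ d) :
    ∀ t s, s + t ≤ m → A s i < r → r ≤ A (s+t) i → r ≤ A s i + t := by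
  intro t
  induction t with
  | zero => intro s _ h1 h2; simp only [Nat.add_zero] at h2; omega
  | succ t ih =>
    intro s hsm h1 h2
    by_cases hb : A (s+1) i < r
    · by_cases hsmall : A s i + 1 < r
      · have hst := (hA.2.2.1 s (by omega) i hi1 hid).1 hsmall
        have := ih (s+1) (by omega) hb (by rw [show s+1+t = s+(t+1) by omega]; exact h2)
        omega
      · omega
    · -- A (s+1) i ≥ r and A s i < r: must have A s i = r - 1
      have hsmall : ¬ (A s i + 1 < r) := by
        intro hx
        have hst := (hA.2.2.1 s (by omega) i hi1 hid).1 hx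
        omega
      omega

lemma path_chain (hA : IsPath r m m' d A) (hr : 2 ≤ r) (hm'1 : 1 ≤ m') (hm'm : m' ≤ m)
    (hmr : m ≤ r) (hd1 : 1 ≤ d) (hdr : d ≤ r) :
    ∀ k c, 1 ≤ c → c ≤ d → r + 1 + k ≤ c + m' → 2*r + c ≤ A (m-k) c + d + 1 := by
  intro k
  induction k with
  | zero =>
    intro c hc1 hcd hcm
    have h4 := (hA.2.2.2.1 c hc1 hcd).2
    rw [Nat.sub_zero, h4]
    unfold rowR
    rw [if_neg (by omega)]
    omega
  | succ k ih =>
    intro c hc1 hcd hcm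
    have hc2 : 2 ≤ c := by omega
    have ihc := ih (c-1) (by omega) (by omega) (by omega)
    -- A (m-k) (c-1) is barred and large
    have hk : k + 1 ≤ m' - 1 := by omega
    have hmk : m - k = (m - k - 1) + 1 := by omega
    have hbar : r ≤ A (m-k) (c-1) := by omega
    have hv := hA.2.2.2.2 (m-k-1) (by omega) (c-1) (by omega) (by omega)
      (by rw [← hmk]; exact hbar)
    rw [← hmk] at hv
    -- absV bound
    have hub : A (m-k) (c-1) < 2*r := hA.1 (m-k) (by omega) (c-1) (by omega) (by omega)
    have habs1 : absV r (A (m-k) (c-1)) + A (m-k) (c-1) = 2*r := by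
      unfold absV; rw [if_neg (by omega)]; omega
    have hsub : c - 1 + 1 = c := by omega
    rw [hsub] at hv
    have habs2 : absV r (A (m-k-1) c) + c ≤ d + 1 := by omega
    -- rule out unbarred
    by_cases hu : A (m-k-1) c < r
    · exfalso
      have habsu : absV r (A (m-k-1) c) = A (m-k-1) c + 1 := by
        unfold absV; rw [if_pos hu]
      have hfin : r ≤ A m c := by
        have h4 := (hA.2.2.2.1 c hc1 hcd).2
        rw [h4]; unfold rowR; rw [if_neg (by omega)]; omega
      have hclimb := path_climb hA hc1 hcd (k+1) (m-k-1) (by omega) hu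
        (by rw [show m-k-1+(k+1) = m by omega]; exact hfin)
      omega
    · unfold absV at habs2
      rw [if_neg hu] at habs2
      have hub2 : A (m-k-1) c < 2*r := hA.1 (m-k-1) (by omega) c (by omega) (by omega)
      have : m - (k+1) = m - k - 1 := by omega
      rw [this]
      omega

lemma path_rigid (hA : IsPath r m m' d A) (hr : 2 ≤ r) (hm'1 : 1 ≤ m') (hm'm : m' ≤ m)
    (hmr : m ≤ r) (hd1 : 1 ≤ d) (hdr : d ≤ r) {i : ℕ} (hi1 : 1 ≤ i) (hid : i ≤ d)
    (hbig : r + 1 ≤ i + m') :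
    ∀ s, m + r + 1 ≤ s + i + m' → s ≤ m → A s i + d + 1 = 2*r + i := by
  intro s hs1 hs2
  have hch := path_chain hA hr hm'1 hm'm hmr hd1 hdr (m - s) i hi1 hid (by omega)
  rw [show m - (m - s) = s by omega] at hch
  have hfin := (hA.2.2.2.1 i hi1 hid).2
  have hmono := path_mono hA hi1 hid hs2 le_rfl
  rw [hfin] at hmono
  unfold rowR at hmono
  rw [if_neg (by omega)] at hmono
  omega

end PathLemmas

def Fcol (r m : ℕ) (Y : ℕ → ℕ → ℂ) (c : ℕ → ℕ) (s : ℕ) : ℂ :=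
  if c s < r
  then (if c (s+1) < r
        then Y (m - s) (c (s+1)) / Y (m - s) (c s + 1)
        else 1 / Y (m - s) (2*r - c (s+1) - 1))
  else Y (m - s) (2*r - c s) / Y (m - s) (2*r - c (s+1) - 1)

def Gcol (r m : ℕ) (Y : ℕ → ℕ → ℂ) (c : ℕ → ℕ) (l : ℕ) : ℂ :=
  if c l < r then Cbar Y (m-l) (c l + 1) else Cc Y (m-l) (2*r - c l - 1)

def lSetc (r m m' i : ℕ) (c : ℕ → ℕ) : Finset ℕ :=
  if i + m' ≤ r then (Finset.range m).filter (fun s => c s = c (s+1))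
  else (Finset.range (m + r + 1 - (i + m'))).filter
        (fun s => (c s < r ∧ c s = c (s+1)) ∨ r ≤ c s)

def Dcol (r m' d i : ℕ) (Y : ℕ → ℕ → ℂ) : ℂ :=
  (∏ t ∈ Finset.Icc 1 (i+m'-r-1), Y t (d+1-i)) / (∏ t ∈ Finset.Icc 1 (i+m'-r), Y t (d-i))

section Column
variable {r m m' d i : ℕ} {Y : ℕ → ℕ → ℂ} {c : ℕ → ℕ}

-- the unbarred part of a column product
lemma column_unbarred_prod (hm : m ≤ r) (hYne : ∀ s l, 1 ≤ s → s ≤ m → 1 ≤ l → l ≤ r → Y s l ≠ 0)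
    {b : ℕ} (hbm : b ≤ m)
    (hlt : ∀ s, s ≤ b → c s < r)
    (hstep01 : ∀ s, s < b → c s ≤ c (s+1) ∧ c (s+1) ≤ c s + 1) :
    ∏ s ∈ Finset.range b, Fcol r m Y c s
      = ∏ l ∈ (Finset.range b).filter (fun s => c s = c (s+1)), Cbar Y (m-l) (c l + 1) := by
  rw [← Finset.prod_filter_mul_prod_filter_not (Finset.range b) (fun s => c s = c (s+1))]
  have h2 : ∏ s ∈ (Finset.range b).filter (fun s => ¬ c s = c (s+1)), Fcol r m Y c s = 1 := by
    apply Finset.prod_eq_one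
    intro s hs
    simp only [Finset.mem_filter, Finset.mem_range] at hs
    have hst := hstep01 s hs.1
    have hmov : c (s+1) = c s + 1 := by omega
    unfold Fcol
    rw [if_pos (hlt s (by omega)), if_pos (hlt (s+1) (by omega)), hmov]
    exact div_self (hYne (m-s) (c s + 1) (by omega) (by omega) (by omega)
      (by have := hlt (s+1) (by omega); omega))
  rw [h2, mul_one]
  apply Finset.prod_congr rfl
  intro l hl
  simp only [Finset.mem_filter, Finset.mem_range] at hl
  unfold Fcol Cbar
  rw [if_pos (hlt l (by omega)), if_pos (hlt (l+1) (by omega)), ← hl.2]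
  simp


lemma column_B_struct (hr : 2 ≤ r) (hm'1 : 1 ≤ m') (hm'm : m' ≤ m) (hmr : m ≤ r)
    (hd1 : 1 ≤ d) (hdr : d ≤ r) (hi1 : 1 ≤ i) (hid : i ≤ d) (hbig : r + 1 ≤ i + m')
    (hmono : ∀ s s', s ≤ s' → s' ≤ m → c s ≤ c s')
    (hstep : ∀ s, s < m → c s + 1 < r → c (s+1) ≤ c s + 1)
    (hc0 : c 0 = i - 1)
    (hrig : ∀ s, m + r + 1 ≤ s + i + m' → s ≤ m → c s + d + 1 = 2*r + i) :
    ∃ T, 1 ≤ T ∧ T ≤ m + r + 1 - (i + m') ∧ m + r + 1 - (i + m') ≤ m ∧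
      c (T-1) + 1 = r ∧ (∀ s, s < T → c s < r) ∧ (∀ s, T ≤ s → s ≤ m → r ≤ c s) := by
  set M1 := m + r + 1 - (i + m') with hM1
  have hM1m : M1 ≤ m := by omega
  have hM1pos : 1 ≤ M1 := by omega
  have hcM1 : r ≤ c M1 := by
    have := hrig M1 (by omega) hM1m
    omega
  have hex : ∃ s, r ≤ c s := ⟨M1, hcM1⟩
  set T := Nat.find hex with hT
  have hTspec : r ≤ c T := Nat.find_spec hex
  have hTmin : ∀ s, s < T → c s < r := fun s hs => by
    have := Nat.find_min hex hs; omega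
  have hTM1 : T ≤ M1 := Nat.find_min' hex hcM1
  have hT1 : 1 ≤ T := by
    rcases Nat.eq_zero_or_pos T with h0 | h
    · rw [h0] at hTspec; rw [hc0] at hTspec; omega
    · exact h
  refine ⟨T, hT1, hTM1, hM1m, ?_, hTmin, ?_⟩
  · have hu : c (T-1) < r := hTmin (T-1) (by omega)
    by_contra hne
    have hsm : c (T-1) + 1 < r := by omega
    have := hstep (T-1) (by omega) hsm
    rw [show T - 1 + 1 = T by omega] at this
    omega
  · intro s hTs hsm
    exact le_trans hTspec (hmono T s hTs hsm)


lemma column_B_decomp {T : ℕ} (hT1 : 1 ≤ T) (hTM1 : T ≤ m + r + 1 - (i + m'))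
    (hM1m : m + r + 1 - (i + m') ≤ m)
    (hunb : ∀ s, s < T → c s < r) (hbar : ∀ s, T ≤ s → s ≤ m → r ≤ c s)
    (hbig : ¬ (i + m' ≤ r)) :
    lSetc r m m' i c
      = (Finset.range (T-1)).filter (fun s => c s = c (s+1)) ∪
        Finset.Ico T (m + r + 1 - (i + m')) := by
  set M1 := m + r + 1 - (i + m') with hM1
  unfold lSetc
  rw [if_neg hbig]
  ext s
  simp only [Finset.mem_filter, Finset.mem_range, Finset.mem_union, Finset.mem_Ico]
  constructor
  · rintro ⟨hsM1, hcase⟩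
    rcases hcase with ⟨hu, hsta⟩ | hb
    · left
      have hsT : s < T := by
        by_contra h
        have := hbar s (by omega) (by omega)
        omega
      refine ⟨?_, hsta⟩
      rcases Nat.lt_or_ge s (T-1) with h | h
      · exact h
      · exfalso
        have hseq : s = T - 1 := by omega
        have : r ≤ c (s+1) := by
          rw [hseq, show T - 1 + 1 = T by omega]
          exact hbar T le_rfl (by omega)
        omega
    · right
      constructor
      · by_contra h
        have := hunb s (by omega)
        omega
      · exact hsM1
  · rintro (⟨hsT, hsta⟩ | ⟨hTs, hsM1⟩)
    · exact ⟨by omega, Or.inl ⟨hunb s (by omega), hsta⟩⟩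
    · exact ⟨hsM1, Or.inr (hbar s hTs (by omega))⟩

lemma column_B_disj {T : ℕ} (hT1 : 1 ≤ T) :
    Disjoint ((Finset.range (T-1)).filter (fun s => c s = c (s+1)))
      (Finset.Ico T (m + r + 1 - (i + m'))) := by
  rw [Finset.disjoint_left]
  intro s hs hs'
  simp only [Finset.mem_filter, Finset.mem_range] at hs
  simp only [Finset.mem_Ico] at hs'
  omega


lemma column_steps01_below (hmono : ∀ s s', s ≤ s' → s' ≤ m → c s ≤ c s')
    (hstep : ∀ s, s < m → c s + 1 < r → c (s+1) ≤ c s + 1)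
    {b : ℕ} (hbm : b ≤ m) (hlt : ∀ s, s ≤ b → c s < r) :
    ∀ s, s < b → c s ≤ c (s+1) ∧ c (s+1) ≤ c s + 1 := by
  intro s hs
  refine ⟨hmono s (s+1) (by omega) (by omega), ?_⟩
  by_cases hsm : c s + 1 < r
  · exact hstep s (by omega) hsm
  · have h1 := hlt s (by omega)
    have h2 := hlt (s+1) (by omega)
    omega

lemma column_card (hr : 2 ≤ r) (hm'1 : 1 ≤ m') (hm'm : m' ≤ m) (hmr : m ≤ r)
    (hd1 : 1 ≤ d) (hdr : d ≤ r) (hi1 : 1 ≤ i) (hid : i ≤ d)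
    (hmono : ∀ s s', s ≤ s' → s' ≤ m → c s ≤ c s')
    (hstep : ∀ s, s < m → c s + 1 < r → c (s+1) ≤ c s + 1)
    (hc0 : c 0 = i - 1)
    (hcm : c m = rowR r m' d (i-1))
    (hrig : r + 1 ≤ i + m' → ∀ s, m + r + 1 ≤ s + i + m' → s ≤ m → c s + d + 1 = 2*r + i) :
    (lSetc r m m' i c).card = m - m' := by
  by_cases hAB : i + m' ≤ r
  · -- case A
    have hcmv : c m = m' + (i - 1) := by
      rw [hcm]; unfold rowR; rw [if_pos (by omega)]
    have hlt : ∀ s, s ≤ m → c s < r := by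
      intro s hs
      have := hmono s m hs le_rfl
      omega
    have hcount := card_stationary c 0 m (by omega)
      (fun s _ hs => column_steps01_below hmono hstep (b := m) le_rfl hlt s hs)
    unfold lSetc
    rw [if_pos hAB, ← Finset.range_eq_Ico] at *
    omega
  · -- case B
    obtain ⟨T, hT1, hTM1, hM1m, hcT1, hunb, hbar⟩ :=
      column_B_struct hr hm'1 hm'm hmr hd1 hdr hi1 hid (by omega) hmono hstep hc0
        (hrig (by omega))
    rw [column_B_decomp hT1 hTM1 hM1m hunb hbar hAB,
      Finset.card_union_of_disjoint (column_B_disj hT1)]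
    have hcount := card_stationary c 0 (T-1) (by omega)
      (fun s _ hs => column_steps01_below hmono hstep (b := T-1) (by omega)
        (fun s hs => hunb s (by omega)) s hs)
    rw [← Finset.range_eq_Ico] at hcount
    rw [Nat.card_Ico]
    omega


lemma column_prod (hr : 2 ≤ r) (hm'1 : 1 ≤ m') (hm'm : m' ≤ m) (hmr : m ≤ r)
    (hd1 : 1 ≤ d) (hdr : d ≤ r) (hi1 : 1 ≤ i) (hid : i ≤ d)
    (hY0 : ∀ s, Y s 0 = 1)
    (hYne : ∀ s l, 1 ≤ s → s ≤ m → 1 ≤ l → l ≤ r → Y s l ≠ 0)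
    (hub : ∀ s, s ≤ m → c s < 2*r)
    (hmono : ∀ s s', s ≤ s' → s' ≤ m → c s ≤ c s')
    (hstep : ∀ s, s < m → c s + 1 < r → c (s+1) ≤ c s + 1)
    (hc0 : c 0 = i - 1)
    (hcm : c m = rowR r m' d (i-1))
    (hrig : r + 1 ≤ i + m' → ∀ s, m + r + 1 ≤ s + i + m' → s ≤ m → c s + d + 1 = 2*r + i) :
    ∏ s ∈ Finset.range m, Fcol r m Y c s
      = (∏ l ∈ lSetc r m m' i c, Gcol r m Y c l) * Dcol r m' d i Y := by
  by_cases hAB : i + m' ≤ r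
  · -- Case A
    have hDone : Dcol r m' d i Y = 1 := by
      unfold Dcol
      rw [show i + m' - r - 1 = 0 by omega, show i + m' - r = 0 by omega]
      simp
    rw [hDone, mul_one]
    unfold lSetc
    rw [if_pos hAB]
    have hcmv : c m = m' + (i - 1) := by
      rw [hcm]; unfold rowR; rw [if_pos (by omega)]
    have hlt : ∀ s, s ≤ m → c s < r := by
      intro s hs
      have := hmono s m hs le_rfl
      omega
    rw [column_unbarred_prod hmr hYne le_rfl hlt
      (column_steps01_below hmono hstep (b := m) le_rfl hlt)]
    apply Finset.prod_congr rfl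
    intro l hl
    simp only [Finset.mem_filter, Finset.mem_range] at hl
    unfold Gcol
    rw [if_pos (hlt l (by omega))]
  · -- Case B
    obtain ⟨T, hT1, hTM1, hM1m, hcT1, hunb, hbar⟩ :=
      column_B_struct hr hm'1 hm'm hmr hd1 hdr hi1 hid (by omega) hmono hstep hc0
        (hrig (by omega))
    set M1 := m + r + 1 - (i + m') with hM1def
    set N : ℕ → ℂ := fun s => Y (m-s) (2*r - c s) with hN
    set Bv : ℕ → ℂ := fun l => 1 / Y (m - l + 1) (2*r - c l - 1) with hBv
    have hTm : T ≤ m := by omega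
    -- split LHS
    rw [Finset.range_eq_Ico,
      ← Finset.prod_Ico_consecutive (Fcol r m Y c) (Nat.zero_le (T-1)) (show T-1 ≤ m by omega),
      Finset.prod_eq_prod_Ico_succ_bot (show T-1 < m by omega), show T - 1 + 1 = T by omega,
      ← Finset.range_eq_Ico]
    -- F (T-1) = Bv T
    have hFT : Fcol r m Y c (T-1) = Bv T := by
      unfold Fcol
      rw [show T - 1 + 1 = T by omega, if_pos (hunb (T-1) (by omega)),
        if_neg (by have := hbar T le_rfl hTm; omega), hBv]
      simp only []
      rw [show m - (T-1) = m - T + 1 by omega]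
    -- F s = N s * Bv (s+1) on Ico T m
    have hFs : ∀ s ∈ Finset.Ico T m, Fcol r m Y c s = N s * Bv (s+1) := by
      intro s hs
      simp only [Finset.mem_Ico] at hs
      unfold Fcol
      rw [if_neg (by have := hbar s hs.1 (by omega); omega), hN, hBv]
      simp only []
      rw [show m - (s+1) + 1 = m - s by omega, mul_one_div]
    rw [Finset.prod_congr rfl hFs, Finset.prod_mul_distrib]
    have hshift : (∏ s ∈ Finset.Ico T m, Bv (s+1)) = ∏ l ∈ Finset.Ico (T+1) (m+1), Bv l :=
      Finset.prod_Ico_add' Bv T m 1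
    rw [hFT, hshift,
      show Bv T * ((∏ s ∈ Finset.Ico T m, N s) * ∏ l ∈ Finset.Ico (T+1) (m+1), Bv l)
        = (∏ s ∈ Finset.Ico T m, N s) * (Bv T * ∏ l ∈ Finset.Ico (T+1) (m+1), Bv l) by ring,
      ← Finset.prod_eq_prod_Ico_succ_bot (show T < m+1 by omega) Bv,
      ← Finset.prod_Ico_consecutive N (show T ≤ M1 by omega) (show M1 ≤ m by omega),
      ← Finset.prod_Ico_consecutive Bv (show T ≤ M1 by omega) (show M1 ≤ m+1 by omega)]
    -- tails
    have htailN : (∏ s ∈ Finset.Ico M1 m, N s)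
        = ∏ t ∈ Finset.Icc 1 (i+m'-r-1), Y t (d+1-i) := by
      apply Finset.prod_nbij' (fun s => m - s) (fun t => m - t)
      · intro s hs
        simp only [Finset.mem_Ico] at hs
        simp only [Finset.mem_Icc]
        omega
      · intro t ht
        simp only [Finset.mem_Icc] at ht
        simp only [Finset.mem_Ico]
        omega
      · intro s hs
        simp only [Finset.mem_Ico] at hs
        omega
      · intro t ht
        simp only [Finset.mem_Icc] at ht
        omega
      · intro s hs
        simp only [Finset.mem_Ico] at hs
        have := hrig (by omega) s (by omega) (by omega)
        rw [hN]
        simp only []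
        rw [show 2*r - c s = d + 1 - i by omega]
    have htailB : (∏ l ∈ Finset.Ico M1 (m+1), Bv l)
        = (∏ t ∈ Finset.Icc 1 (i+m'-r), Y t (d-i))⁻¹ := by
      rw [← Finset.prod_inv_distrib]
      apply Finset.prod_nbij' (fun l => m - l + 1) (fun t => m + 1 - t)
      · intro l hl
        simp only [Finset.mem_Ico] at hl
        simp only [Finset.mem_Icc]
        omega
      · intro t ht
        simp only [Finset.mem_Icc] at ht
        simp only [Finset.mem_Ico]
        omega
      · intro l hl
        simp only [Finset.mem_Ico] at hl
        omega
      · intro t ht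
        simp only [Finset.mem_Icc] at ht
        omega
      · intro l hl
        simp only [Finset.mem_Ico] at hl
        have := hrig (by omega) l (by omega) (by omega)
        rw [hBv]
        simp only []
        rw [show 2*r - c l - 1 = d - i by omega, one_div]
    rw [htailN, htailB]
    -- unbarred head
    have hlt' : ∀ s, s ≤ T - 1 → c s < r := fun s hs => hunb s (by omega)
    rw [column_unbarred_prod hmr hYne (show T - 1 ≤ m by omega) hlt'
      (column_steps01_below hmono hstep (b := T-1) (by omega) hlt')]
    -- RHS decomposition
    rw [column_B_decomp hT1 hTM1 hM1m hunb hbar hAB,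
      Finset.prod_union (column_B_disj hT1)]
    have hGsta : ∀ l ∈ (Finset.range (T-1)).filter (fun s => c s = c (s+1)),
        Gcol r m Y c l = Cbar Y (m-l) (c l + 1) := by
      intro l hl
      simp only [Finset.mem_filter, Finset.mem_range] at hl
      unfold Gcol
      rw [if_pos (hunb l (by omega))]
    have hGbar : ∀ l ∈ Finset.Ico T M1, Gcol r m Y c l = N l * Bv l := by
      intro l hl
      simp only [Finset.mem_Ico] at hl
      have hbl := hbar l hl.1 (by omega)
      unfold Gcol Cc
      rw [if_neg (by omega), hN, hBv]
      simp only []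
      have hu := hub l (by omega)
      rw [show 2*r - c l - 1 + 1 = 2*r - c l by omega, mul_one_div]
    rw [Finset.prod_congr rfl hGsta, Finset.prod_congr rfl hGbar, Finset.prod_mul_distrib]
    unfold Dcol
    ring

end Column

section RhsCol
variable {r m m' d i : ℕ} {Y : ℕ → ℕ → ℂ} {A : ℕ → ℕ → ℕ}

lemma lSet_eq_lSetc : lSet r m m' A i = lSetc r m m' i (fun s => A s i) := rfl

lemma lv_mem {n : ℕ} (hcard : (lSet r m m' A i).card = n) {s : ℕ} (hs1 : 1 ≤ s) (hsn : s ≤ n) :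
    lv r m m' A i s ∈ lSet r m m' A i := by
  unfold lv
  have hlen : ((lSet r m m' A i).sort (· ≤ ·)).length = n := by
    rw [Finset.length_sort, hcard]
  rw [List.getD_eq_getElem _ _ (by omega)]
  rw [← Finset.mem_sort (α := ℕ) (· ≤ ·)]
  exact List.getElem_mem _

lemma lv_mono {n : ℕ} (hcard : (lSet r m m' A i).card = n) {s s' : ℕ} (hs1 : 1 ≤ s')
    (hss : s' ≤ s) (hsn : s ≤ n) : lv r m m' A i s' ≤ lv r m m' A i s := by
  unfold lv
  have hlen : ((lSet r m m' A i).sort (· ≤ ·)).length = n := by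
    rw [Finset.length_sort, hcard]
  rw [List.getD_eq_getElem _ _ (by omega), List.getD_eq_getElem _ _ (by omega)]
  exact List.Pairwise.rel_get_of_le (Finset.pairwise_sort _ (· ≤ ·)) (a := ⟨s' - 1, by omega⟩) (b := ⟨s - 1, by omega⟩) (by simp; omega)

lemma lSetc_lt_m (hm'1 : 1 ≤ m') (hi1 : 1 ≤ i) {l : ℕ} (hl : l ∈ lSetc r m m' i (fun s => A s i)) :
    l < m := by
  unfold lSetc at hl
  by_cases hAB : i + m' ≤ r
  · rw [if_pos hAB] at hl
    simp only [Finset.mem_filter, Finset.mem_range] at hl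
    exact hl.1
  · rw [if_neg hAB] at hl
    simp only [Finset.mem_filter, Finset.mem_range] at hl
    omega


lemma dv_char (hm'1 : 1 ≤ m') (hi1 : 1 ≤ i) (hid : i ≤ d)
    (hcard : (lSet r m m' A i).card = m - m')
    (hmono : ∀ s s', s ≤ s' → s' ≤ m → A s i ≤ A s' i)
    {s : ℕ} (hs : s ∈ Finset.Icc 1 (m - m')) :
    (s ≤ dv r m m' A i ↔ kv r m m' A i s < r) := by
  have hdown : ∀ a a', 1 ≤ a' → a' ≤ a → a ≤ m - m' →
      (kv r m m' A i a < r) → (kv r m m' A i a' < r) := by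
    intro a a' h1 h2 h3 hk
    unfold kv at *
    have hle := lv_mono hcard h1 h2 h3
    have hmem := lv_mem hcard (by omega) h3
    rw [lSet_eq_lSetc] at hmem
    have hlm : lv r m m' A i a < m := lSetc_lt_m hm'1 hi1 hmem
    exact lt_of_le_of_lt (le_trans (hmono _ _ hle (by omega)) (le_refl _)) (by omega)
  have hfd := filter_downward (m - m') (fun a => kv r m m' A i a < r)
    (fun a a' h1 h2 h3 hk => hdown a a' h1 h2 h3 hk)
  simp only [Finset.mem_Icc] at hs
  constructor
  · intro hsd
    have : s ∈ (Finset.Icc 1 (m-m')).filter (fun a => kv r m m' A i a < r) := by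
      rw [hfd]
      exact Finset.mem_Icc.mpr ⟨hs.1, hsd⟩
    exact (Finset.mem_filter.mp this).2
  · intro hk
    have : s ∈ (Finset.Icc 1 (m-m')).filter (fun a => kv r m m' A i a < r) :=
      Finset.mem_filter.mpr ⟨Finset.mem_Icc.mpr hs, hk⟩
    rw [hfd] at this
    exact (Finset.mem_Icc.mp this).2


lemma rhs_col (hm'1 : 1 ≤ m') (hi1 : 1 ≤ i) (hid : i ≤ d)
    (hcard : (lSet r m m' A i).card = m - m')
    (hmono : ∀ s s', s ≤ s' → s' ≤ m → A s i ≤ A s' i) :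
    (∏ s ∈ Finset.Icc 1 (m - m'),
      (if s ≤ dv r m m' A i
       then Cbar Y (m - lv r m m' A i s) (kv r m m' A i s + 1)
       else Cc Y (m - lv r m m' A i s) (2*r - kv r m m' A i s - 1)))
      = ∏ l ∈ lSet r m m' A i, Gcol r m Y (fun s => A s i) l := by
  rw [← prod_sorted_enum (lSet r m m' A i) (m-m') hcard (Gcol r m Y (fun s => A s i))]
  apply Finset.prod_congr rfl
  intro s hs
  have hiff := dv_char hm'1 hi1 hid hcard hmono hs
  show _ = Gcol r m Y (fun s => A s i) (lv r m m' A i s)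
  unfold Gcol
  simp only []
  show _ = (if kv r m m' A i s < r then Cbar Y (m - lv r m m' A i s) (kv r m m' A i s + 1)
    else Cc Y (m - lv r m m' A i s) (2*r - kv r m m' A i s - 1))
  by_cases hk : kv r m m' A i s < r
  · rw [if_pos (hiff.mpr hk), if_pos hk]
  · rw [if_neg (fun h => hk (hiff.mp h)), if_neg hk]

end RhsCol

lemma prod_Dcol (r m m' d : ℕ) (hr : 2 ≤ r) (hm'1 : 1 ≤ m') (hm'm : m' ≤ m) (hmr : m ≤ r)
    (hd1 : 1 ≤ d) (hdr : d ≤ r) (Y : ℕ → ℕ → ℂ)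
    (hY0 : ∀ s, Y s 0 = 1)
    (hYne : ∀ s l, 1 ≤ s → s ≤ m → 1 ≤ l → l ≤ r → Y s l ≠ 0) :
    ∏ i ∈ Finset.Icc 1 d, Dcol r m' d i Y = 1 := by
  set Nf : ℕ → ℂ := fun j => ∏ t ∈ Finset.Icc 1 (j+m'-r-1), Y t (d+1-j) with hNf
  have hNfne : ∀ j, 1 ≤ j → j ≤ d + 1 → Nf j ≠ 0 := by
    intro j h1 h2
    rw [hNf]
    simp only []
    rw [Finset.prod_ne_zero_iff]
    intro t ht
    simp only [Finset.mem_Icc] at ht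
    by_cases hj : j ≤ d
    · exact hYne t (d+1-j) (by omega) (by omega) (by omega) (by omega)
    · rw [show d + 1 - j = 0 by omega, hY0]; exact one_ne_zero
  have hstep : ∀ i ∈ Finset.Icc 1 d, Dcol r m' d i Y = Nf i / Nf (i+1) := by
    intro i hi
    simp only [Finset.mem_Icc] at hi
    unfold Dcol
    rw [hNf]
    simp only []
    rw [show i + 1 + m' - r - 1 = i + m' - r by omega, show d + 1 - (i+1) = d - i by omega]
  rw [Finset.prod_congr rfl hstep, prodIccDiv Nf d hNfne]
  have h1 : Nf 1 = 1 := by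
    rw [hNf]; simp only []
    rw [show 1 + m' - r - 1 = 0 by omega]
    simp
  have h2 : Nf (d+1) = 1 := by
    rw [hNf]; simp only []
    rw [show d + 1 - (d+1) = 0 by omega]
    rw [Finset.prod_congr rfl (fun t _ => hY0 t), Finset.prod_const_one]
  rw [h1, h2, one_div_one]
/- **Statement 15** (Lemma 6.16): the label of a path as a product of the
monomials `C̄` and `C`:
`Q(p) = ∏_{i=1}^d (∏_{s=1}^{δ_i} C̄(m-l^{(s)}_i, k^{(s)}_i)) (∏_{s=δ_i+1}^{m-m'} C(m-l^{(s)}_i, |k^{(s)}_i|-1))`.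
For `s ≤ δ_i` the element `k^{(s)}_i` is unbarred with `J`-value `kv + 1`; for
`s > δ_i` it is barred with `|k^{(s)}_i| = 2r - kv`. -/
theorem path_label_formula
    (r m m' d : ℕ) (hr : 2 ≤ r) (hm'1 : 1 ≤ m') (hm'm : m' ≤ m) (hmr : m ≤ r)
    (hd1 : 1 ≤ d) (hdr : d ≤ r) (hbig : r < m' + d)
    (Y : ℕ → ℕ → ℂ)
    (hY0 : ∀ s, Y s 0 = 1) (hYr1 : ∀ s, Y s (r+1) = 1) (hYm : ∀ l, d < l → Y m l = 1)
    (hYne : ∀ s l, 1 ≤ s → s ≤ m → 1 ≤ l → l ≤ r → Y s l ≠ 0)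
    (A : ℕ → ℕ → ℕ) (hA : IsPath r m m' d A) :
    QpathN r m d Y A =
      ∏ i ∈ Finset.Icc 1 d, ∏ s ∈ Finset.Icc 1 (m - m'),
        (if s ≤ dv r m m' A i
         then Cbar Y (m - lv r m m' A i s) (kv r m m' A i s + 1)
         else Cc Y (m - lv r m m' A i s) (2*r - kv r m m' A i s - 1)) := by
  have h1 : QpathN r m d Y A
      = ∏ i ∈ Finset.Icc 1 d, ∏ s ∈ Finset.range m, Fcol r m Y (fun s => A s i) s := by
    unfold QpathN
    rw [Finset.prod_comm]
    rfl
  rw [h1]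
  have percol : ∀ i ∈ Finset.Icc 1 d,
      (∏ s ∈ Finset.range m, Fcol r m Y (fun s => A s i) s)
        = (∏ l ∈ lSet r m m' A i, Gcol r m Y (fun s => A s i) l) * Dcol r m' d i Y := by
    intro i hi
    simp only [Finset.mem_Icc] at hi
    rw [lSet_eq_lSetc]
    exact column_prod hr hm'1 hm'm hmr hd1 hdr hi.1 hi.2 hY0 hYne
      (fun s hs => hA.1 s hs i hi.1 hi.2)
      (fun s s' hss hsm => path_mono hA hi.1 hi.2 hss hsm)
      (fun s hs hsm => by have := (hA.2.2.1 s hs i hi.1 hi.2).1 hsm; omega)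
      ((hA.2.2.2.1 i hi.1 hi.2).1)
      ((hA.2.2.2.1 i hi.1 hi.2).2)
      (fun hbig s h1 h2 => path_rigid hA hr hm'1 hm'm hmr hd1 hdr hi.1 hi.2 hbig s h1 h2)
  rw [Finset.prod_congr rfl percol, Finset.prod_mul_distrib,
    prod_Dcol r m m' d hr hm'1 hm'm hmr hd1 hdr Y hY0 hYne, mul_one]
  apply Finset.prod_congr rfl
  intro i hi
  simp only [Finset.mem_Icc] at hi
  have hcard : (lSet r m m' A i).card = m - m' := by
    rw [lSet_eq_lSetc]
    exact column_card hr hm'1 hm'm hmr hd1 hdr hi.1 hi.2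
      (fun s s' hss hsm => path_mono hA hi.1 hi.2 hss hsm)
      (fun s hs hsm => by have := (hA.2.2.1 s hs i hi.1 hi.2).1 hsm; omega)
      ((hA.2.2.2.1 i hi.1 hi.2).1)
      ((hA.2.2.2.1 i hi.1 hi.2).2)
      (fun hbig s h1 h2 => path_rigid hA hr hm'1 hm'm hmr hd1 hdr hi.1 hi.2 hbig s h1 h2)
  exact (rhs_col hm'1 hi.1 hi.2 hcard
    (fun s s' hss hsm => path_mono hA hi.1 hi.2 hss hsm)).symm

end CTypeMinors
end
end

section
/- Assume m′+d > r. For every family (K^{(s)}_i)_{1≤s≤m−m′, 1≤i≤d} of elements of J satisfying (*), there exists a path p ∈ X_d(m,m′) whose associated data satisfies k^{(s)}_i = K^{(s)}_i for all 1 ≤ s ≤ m−m′ and 1 ≤ i ≤ d. -/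
noncomputable section
open Matrix BigOperators

namespace CTypeMinors

/-- `δ_i` built from the data `K`: the number of `t ∈ [1,μ]` with `K t i` unbarred. -/
def Kdel (r mu : ℕ) (K : ℕ → ℕ → ℕ) (i : ℕ) : ℕ :=
  ((Finset.Icc 1 mu).filter (fun t => K t i < r)).card

/-- number of "flat" steps of column `i` strictly before time `s`. -/
def Kfl (r mu : ℕ) (K : ℕ → ℕ → ℕ) (i s : ℕ) : ℕ :=
  ((Finset.Icc 1 mu).filter (fun t => K t i < r ∧ K t i + t < s + i)).card

/-- The path built from the data `K`. -/
def KA (r m m' d : ℕ) (K : ℕ → ℕ → ℕ) (s i : ℕ) : ℕ :=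
  if s + i ≤ r + Kdel r (m - m') K i then i - 1 + s - Kfl r (m - m') K i s
  else if s + i ≤ m + r - m' then K (s + i - r) i
  else 2*r + i - 1 - d

/-- The time positions `l^{(t)}_i` built from the data `K`. -/
def Lf (r : ℕ) (K : ℕ → ℕ → ℕ) (i t : ℕ) : ℕ :=
  if K t i < r then K t i + t - i else r + t - i

/- **Statement 16** (surjectivity part of the proof of Theorem 5.7): every family
`(K^{(s)}_i)` of elements of `J` (encoded by 0-indexed naturals `K s i < 2r`)
satisfying `(*)` arises as the associated data `k^{(s)}_i` of some path
`p ∈ X_d(m,m')`. -/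
theorem star_family_realized_by_path
    (r m m' d : ℕ) (hr : 2 ≤ r) (hm'1 : 1 ≤ m') (hm'm : m' ≤ m) (hmr : m ≤ r)
    (hd1 : 1 ≤ d) (hdr : d ≤ r) (hbig : r < m' + d)
    (K : ℕ → ℕ → ℕ)
    (hKrange : ∀ s, 1 ≤ s → s ≤ m - m' → ∀ i, 1 ≤ i → i ≤ d → K s i < 2*r)
    (hKinc : ∀ s, 1 ≤ s → s ≤ m - m' → ∀ i, 1 ≤ i → i < d → K s i < K s (i+1))
    (hKmono : ∀ i, 1 ≤ i → i ≤ d → ∀ s, 1 ≤ s → s < m - m' → K s i ≤ K (s+1) i)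
    (hKbd : ∀ i, 1 ≤ i → i + m' ≤ r → ∀ s, 1 ≤ s → s ≤ m - m' → K s i + 1 ≤ m' + i) :
    ∃ A : ℕ → ℕ → ℕ, IsPath r m m' d A ∧
      ∀ s, 1 ≤ s → s ≤ m - m' → ∀ i, 1 ≤ i → i ≤ d →
        kv r m m' A i s = K s i := by
  -- monotonicity of K in t (general distance)
  have hKmono2 : ∀ i, 1 ≤ i → i ≤ d → ∀ a j, 1 ≤ a → a + j ≤ m - m' → K a i ≤ K (a+j) i := by
    intro i hi1 hi2 a j
    induction j with
    | zero => intro _ _; simp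
    | succ n ih =>
      intro ha h
      have h1 := ih ha (by omega)
      have h2 := hKmono i hi1 hi2 (a+n) (by omega) (by omega)
      show K a i ≤ K (a+n+1) i
      omega
  have hKle : ∀ i, 1 ≤ i → i ≤ d → ∀ a b, 1 ≤ a → a ≤ b → b ≤ m - m' → K a i ≤ K b i := by
    intro i hi1 hi2 a b ha hab hb
    obtain ⟨j, rfl⟩ : ∃ j, b = a + j := ⟨b - a, by omega⟩
    exact hKmono2 i hi1 hi2 a j ha hb
  -- chain in i
  have hchain : ∀ t, 1 ≤ t → t ≤ m - m' → ∀ i, 1 ≤ i → ∀ j, i + j ≤ d → K t i + j ≤ K t (i+j) := by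
    intro t ht1 ht2 i hi1 j
    induction j with
    | zero => intro _; simp
    | succ n ih =>
      intro h
      have h1 := ih (by omega)
      have h2 := hKinc t ht1 ht2 (i+n) (by omega) (by omega)
      show K t i + (n+1) ≤ K t (i+n+1)
      omega
  have hKlow : ∀ t, 1 ≤ t → t ≤ m - m' → ∀ i, 1 ≤ i → i ≤ d → i ≤ K t i + 1 := by
    intro t ht1 ht2 i hi1 hi2
    have := hchain t ht1 ht2 1 (by omega) (i-1) (by omega)
    have he : 1 + (i-1) = i := by omega
    rw [he] at this
    omega
  have hKhigh : ∀ t, 1 ≤ t → t ≤ m - m' → ∀ i, 1 ≤ i → i ≤ d → K t i + (d - i) < 2*r := by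
    intro t ht1 ht2 i hi1 hi2
    have h1 := hchain t ht1 ht2 i hi1 (d-i) (by omega)
    have he : i + (d-i) = d := by omega
    rw [he] at h1
    have h2 := hKrange t ht1 ht2 d hd1 le_rfl
    omega
  -- δ facts
  have hdle : ∀ i, Kdel r (m - m') K i ≤ m - m' := by
    intro i
    have := Finset.card_le_card (Finset.filter_subset (fun t => K t i < r) (Finset.Icc 1 (m-m')))
    simpa [Kdel, Nat.card_Icc] using this
  have hdc1 : ∀ i, 1 ≤ i → i ≤ d → ∀ t, 1 ≤ t → t ≤ m - m' → K t i < r →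
      t ≤ Kdel r (m - m') K i := by
    intro i hi1 hi2 t ht1 ht2 htr
    have hsub : Finset.Icc 1 t ⊆ (Finset.Icc 1 (m-m')).filter (fun u => K u i < r) := by
      intro u hu
      simp only [Finset.mem_Icc] at hu
      simp only [Finset.mem_filter, Finset.mem_Icc]
      have := hKle i hi1 hi2 u t hu.1 hu.2 ht2
      exact ⟨⟨hu.1, by omega⟩, by omega⟩
    have := Finset.card_le_card hsub
    rw [Nat.card_Icc] at this
    unfold Kdel
    omega
  have hdc2 : ∀ i, 1 ≤ i → i ≤ d → ∀ t, 1 ≤ t → t ≤ m - m' → t ≤ Kdel r (m - m') K i →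
      K t i < r := by
    intro i hi1 hi2 t ht1 ht2 htd
    by_contra hh
    push_neg at hh
    have hsub : (Finset.Icc 1 (m-m')).filter (fun u => K u i < r) ⊆ Finset.Icc 1 (t-1) := by
      intro u hu
      simp only [Finset.mem_filter, Finset.mem_Icc] at hu
      simp only [Finset.mem_Icc]
      refine ⟨hu.1.1, ?_⟩
      by_contra hc
      push_neg at hc
      have := hKle i hi1 hi2 t u ht1 (by omega) hu.1.2
      omega
    have := Finset.card_le_card hsub
    rw [Nat.card_Icc] at this
    unfold Kdel at htd
    omega
  have hδmono : ∀ i, 1 ≤ i → i + 1 ≤ d → Kdel r (m-m') K (i+1) ≤ Kdel r (m-m') K i := by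
    intro i hi1 hi2
    apply Finset.card_le_card
    intro t ht
    simp only [Finset.mem_filter, Finset.mem_Icc] at ht ⊢
    have := hKinc t ht.1.1 ht.1.2 i hi1 (by omega)
    exact ⟨ht.1, by omega⟩
  -- f facts
  have hfled : ∀ i s, Kfl r (m-m') K i s ≤ Kdel r (m-m') K i := by
    intro i s
    apply Finset.card_le_card
    intro t ht
    simp only [Finset.mem_filter] at ht ⊢
    exact ⟨ht.1, ht.2.1⟩
  have hfles : ∀ i, 1 ≤ i → i ≤ d → ∀ s, Kfl r (m-m') K i s ≤ s := by
    intro i hi1 hi2 s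
    have hsub : (Finset.Icc 1 (m-m')).filter (fun t => K t i < r ∧ K t i + t < s + i)
        ⊆ Finset.Icc 1 s := by
      intro t ht
      simp only [Finset.mem_filter, Finset.mem_Icc] at ht
      simp only [Finset.mem_Icc]
      have := hKlow t ht.1.1 ht.1.2 i hi1 hi2
      exact ⟨ht.1.1, by omega⟩
    have := Finset.card_le_card hsub
    rw [Nat.card_Icc] at this
    unfold Kfl
    omega
  have hfsplit : ∀ i s, Kfl r (m-m') K i (s+1) = Kfl r (m-m') K i s +
      ((Finset.Icc 1 (m-m')).filter (fun t => K t i < r ∧ K t i + t = s + i)).card := by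
    intro i s
    unfold Kfl
    rw [← Finset.card_union_of_disjoint ?_]
    · congr 1
      ext t
      simp only [Finset.mem_filter, Finset.mem_union, Finset.mem_Icc]
      constructor
      · rintro ⟨h1, h2, h3⟩
        rcases Nat.lt_or_ge (K t i + t) (s + i) with h | h
        · exact Or.inl ⟨h1, h2, h⟩
        · exact Or.inr ⟨h1, h2, by omega⟩
      · rintro (⟨h1, h2, h3⟩ | ⟨h1, h2, h3⟩) <;> exact ⟨h1, h2, by omega⟩
    · rw [Finset.disjoint_left]
      intro t ht ht'
      simp only [Finset.mem_filter] at ht ht'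
      omega
  have heqone : ∀ i, 1 ≤ i → i ≤ d → ∀ s,
      ((Finset.Icc 1 (m-m')).filter (fun t => K t i < r ∧ K t i + t = s + i)).card ≤ 1 := by
    intro i hi1 hi2 s
    apply Finset.card_le_one.mpr
    intro a ha b hb
    simp only [Finset.mem_filter, Finset.mem_Icc] at ha hb
    rcases Nat.lt_trichotomy a b with h | h | h
    · have := hKle i hi1 hi2 a b ha.1.1 (by omega) hb.1.2
      omega
    · exact h
    · have := hKle i hi1 hi2 b a hb.1.1 (by omega) ha.1.2
      omega
  have hfmono_i : ∀ i, 1 ≤ i → i + 1 ≤ d → ∀ s,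
      Kfl r (m-m') K (i+1) s ≤ Kfl r (m-m') K i s := by
    intro i hi1 hi2 s
    apply Finset.card_le_card
    intro t ht
    simp only [Finset.mem_filter, Finset.mem_Icc] at ht ⊢
    have := hKinc t ht.1.1 ht.1.2 i hi1 (by omega)
    exact ⟨ht.1, by omega, by omega⟩
  -- value lemmas
  have hvalU : ∀ s i, s + i ≤ r + Kdel r (m-m') K i →
      KA r m m' d K s i = i - 1 + s - Kfl r (m-m') K i s := by
    intro s i h
    simp only [KA, if_pos h]
  have hvalB : ∀ s i, ¬(s + i ≤ r + Kdel r (m-m') K i) → s + i ≤ m + r - m' →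
      KA r m m' d K s i = K (s + i - r) i := by
    intro s i h1 h2
    simp only [KA]
    rw [if_neg h1, if_pos h2]
  have hvalC : ∀ s i, ¬(s + i ≤ r + Kdel r (m-m') K i) → ¬(s + i ≤ m + r - m') →
      KA r m m' d K s i = 2*r + i - 1 - d := by
    intro s i h1 h2
    simp only [KA]
    rw [if_neg h1, if_neg h2]
  -- the path stays < r in the unbarred region
  have hUlt : ∀ i, 1 ≤ i → i ≤ d → ∀ s, s + i ≤ r + Kdel r (m-m') K i →
      KA r m m' d K s i < r := by
    intro i hi1 hi2 s hs
    rw [hvalU s i hs]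
    rcases le_or_gt (s+i) r with h | h
    · omega
    · have hsub : Finset.Icc 1 (s+i-r) ⊆
          (Finset.Icc 1 (m-m')).filter (fun t => K t i < r ∧ K t i + t < s + i) := by
        intro t ht
        simp only [Finset.mem_Icc] at ht
        simp only [Finset.mem_filter, Finset.mem_Icc]
        have hd := hdle i
        have htd : t ≤ Kdel r (m-m') K i := by omega
        have htμ : t ≤ m - m' := by omega
        have := hdc2 i hi1 hi2 t ht.1 htμ htd
        exact ⟨⟨ht.1, htμ⟩, this, by omega⟩
      have := Finset.card_le_card hsub
      rw [Nat.card_Icc] at this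
      unfold Kfl at *
      omega
  -- the path is ≥ r outside the unbarred region
  have hBCge : ∀ i, 1 ≤ i → i ≤ d → ∀ s, ¬(s + i ≤ r + Kdel r (m-m') K i) →
      r ≤ KA r m m' d K s i := by
    intro i hi1 hi2 s h
    rcases le_or_gt (s+i) (m+r-m') with hB | hC
    · rw [hvalB s i h hB]
      by_contra hh
      push_neg at hh
      have := hdc1 i hi1 hi2 (s+i-r) (by omega) (by omega) hh
      omega
    · rw [hvalC s i h (by omega)]
      omega
  -- flatness characterization inside the unbarred region
  have hflatiff : ∀ i, 1 ≤ i → i ≤ d → ∀ s, s + 1 + i ≤ r + Kdel r (m-m') K i →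
      (KA r m m' d K s i = KA r m m' d K (s+1) i ↔
        ∃ t, 1 ≤ t ∧ t ≤ m - m' ∧ K t i < r ∧ K t i + t = s + i) := by
    intro i hi1 hi2 s h
    rw [hvalU s i (by omega), hvalU (s+1) i h]
    have hsp := hfsplit i s
    have he1 := heqone i hi1 hi2 s
    have hf0 := hfles i hi1 hi2 s
    constructor
    · intro he
      have hcard : ((Finset.Icc 1 (m-m')).filter
          (fun t => K t i < r ∧ K t i + t = s + i)).card = 1 := by omega
      obtain ⟨t, ht⟩ := Finset.card_eq_one.mp hcard
      have : t ∈ (Finset.Icc 1 (m-m')).filter (fun t => K t i < r ∧ K t i + t = s + i) := by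
        rw [ht]; exact Finset.mem_singleton_self t
      simp only [Finset.mem_filter, Finset.mem_Icc] at this
      exact ⟨t, this.1.1, this.1.2, this.2.1, this.2.2⟩
    · rintro ⟨t, h1, h2, h3, h4⟩
      have hmem : t ∈ (Finset.Icc 1 (m-m')).filter
          (fun t => K t i < r ∧ K t i + t = s + i) := by
        simp only [Finset.mem_filter, Finset.mem_Icc]
        exact ⟨⟨h1, h2⟩, h3, h4⟩
      have := Finset.card_pos.mpr ⟨t, hmem⟩
      omega

  -- strict monotonicity of Lf
  have hLmono : ∀ i, 1 ≤ i → i ≤ d → ∀ a b, 1 ≤ a → a < b → b ≤ m - m' →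
      Lf r K i a < Lf r K i b := by
    intro i hi1 hi2 a b ha hab hb
    have hla := hKlow a ha (by omega) i hi1 hi2
    have hlb := hKlow b (by omega) hb i hi1 hi2
    have hmono := hKle i hi1 hi2 a b ha (by omega) hb
    unfold Lf
    by_cases h1 : K a i < r
    · by_cases h2 : K b i < r
      · rw [if_pos h1, if_pos h2]; omega
      · rw [if_pos h1, if_neg h2]; omega
    · have h2 : ¬ (K b i < r) := by omega
      rw [if_neg h1, if_neg h2]; omega
  -- lSet equals the image of Lf
  have lset_eq : ∀ i, 1 ≤ i → i ≤ d →
      lSet r m m' (KA r m m' d K) i = (Finset.Icc 1 (m - m')).image (Lf r K i) := by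
    intro i hi1 hi2
    unfold lSet
    by_cases hc : i + m' ≤ r
    · rw [if_pos hc]
      have hδ : Kdel r (m-m') K i = m - m' := by
        unfold Kdel
        rw [Finset.filter_true_of_mem ?_, Nat.card_Icc]
        · omega
        · intro t ht
          simp only [Finset.mem_Icc] at ht
          have := hKbd i hi1 hc t ht.1 ht.2
          omega
      ext s
      simp only [Finset.mem_filter, Finset.mem_range, Finset.mem_image, Finset.mem_Icc]
      constructor
      · rintro ⟨hsm, hflat⟩
        obtain ⟨t, ht1, ht2, htr, hte⟩ := (hflatiff i hi1 hi2 s (by omega)).mp hflat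
        refine ⟨t, ⟨ht1, ht2⟩, ?_⟩
        have := hKlow t ht1 ht2 i hi1 hi2
        unfold Lf
        rw [if_pos htr]
        omega
      · rintro ⟨t, ⟨ht1, ht2⟩, hts⟩
        have htr : K t i < r := by
          have := hKbd i hi1 hc t ht1 ht2
          omega
        have hlow := hKlow t ht1 ht2 i hi1 hi2
        have hs : K t i + t = s + i := by
          unfold Lf at hts
          rw [if_pos htr] at hts
          omega
        have hbd := hKbd i hi1 hc t ht1 ht2
        constructor
        · omega
        · exact (hflatiff i hi1 hi2 s (by omega)).mpr ⟨t, ht1, ht2, htr, hs⟩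
    · rw [if_neg hc]
      ext s
      simp only [Finset.mem_filter, Finset.mem_range, Finset.mem_image, Finset.mem_Icc]
      have hd := hdle i
      constructor
      · rintro ⟨hsr, hP⟩
        have hsT : s + i + m' ≤ m + r := by omega
        rcases hP with ⟨hlt, hflat⟩ | hge
        · have hsU : s + i ≤ r + Kdel r (m-m') K i := by
            by_contra h
            have := hBCge i hi1 hi2 s h
            omega
          have hsU1 : s + 1 + i ≤ r + Kdel r (m-m') K i := by
            by_contra h
            have := hBCge i hi1 hi2 (s+1) (by omega)
            omega
          obtain ⟨t, ht1, ht2, htr, hte⟩ := (hflatiff i hi1 hi2 s hsU1).mp hflat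
          refine ⟨t, ⟨ht1, ht2⟩, ?_⟩
          have := hKlow t ht1 ht2 i hi1 hi2
          unfold Lf
          rw [if_pos htr]
          omega
        · have hnU : ¬ (s + i ≤ r + Kdel r (m-m') K i) := by
            intro h
            have := hUlt i hi1 hi2 s h
            omega
          have hB : s + i ≤ m + r - m' := by omega
          rw [hvalB s i hnU hB] at hge
          refine ⟨s + i - r, ⟨by omega, by omega⟩, ?_⟩
          unfold Lf
          rw [if_neg (by omega)]
          omega
      · rintro ⟨t, ⟨ht1, ht2⟩, hts⟩
        have hlow := hKlow t ht1 ht2 i hi1 hi2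
        by_cases htr : K t i < r
        · have hs : K t i + t = s + i := by
            unfold Lf at hts
            rw [if_pos htr] at hts
            omega
          have htd := hdc1 i hi1 hi2 t ht1 ht2 htr
          have hsU1 : s + 1 + i ≤ r + Kdel r (m-m') K i := by omega
          refine ⟨by omega, Or.inl ⟨?_, ?_⟩⟩
          · exact hUlt i hi1 hi2 s (by omega)
          · exact (hflatiff i hi1 hi2 s hsU1).mpr ⟨t, ht1, ht2, htr, hs⟩
        · push_neg at htr
          have hs : r + t = s + i := by
            unfold Lf at hts
            rw [if_neg (by omega)] at hts
            omega
          have htd : Kdel r (m-m') K i < t := by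
            by_contra h
            push_neg at h
            have := hdc2 i hi1 hi2 t ht1 ht2 h
            omega
          have hnU : ¬ (s + i ≤ r + Kdel r (m-m') K i) := by omega
          refine ⟨by omega, Or.inr ?_⟩
          rw [hvalB s i hnU (by omega)]
          have : s + i - r = t := by omega
          rw [this]
          omega

  -- sorted list of lSet
  have hsortl : ∀ i, 1 ≤ i → i ≤ d →
      (lSet r m m' (KA r m m' d K) i).sort (· ≤ ·) =
        (List.range (m - m')).map (fun j => Lf r K i (j+1)) := by
    intro i hi1 hi2
    have hmono := hLmono i hi1 hi2
    refine (fun hp hs => List.Perm.eq_of_pairwise' (Finset.pairwise_sort _ _) hs hp) ?_ ?_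
    · refine List.perm_of_nodup_nodup_toFinset_eq (Finset.sort_nodup _ _) ?_ ?_
      · refine List.Nodup.map_on ?_ (List.nodup_range (n := _))
        intro x hx y hy hxy
        simp only [List.mem_range] at hx hy
        by_contra hne
        rcases Nat.lt_or_ge x y with h | h
        · exact absurd hxy (Nat.ne_of_lt (hmono _ _ (by omega) (by omega) (by omega)))
        · have h' : y < x := by omega
          exact absurd hxy.symm (Nat.ne_of_lt (hmono _ _ (by omega) (by omega) (by omega)))
      · rw [Finset.sort_toFinset, lset_eq i hi1 hi2]
        ext a
        simp only [List.mem_toFinset, List.mem_map, List.mem_range,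
          Finset.mem_image, Finset.mem_Icc]
        constructor
        · rintro ⟨t, ⟨h1, h2⟩, h3⟩
          refine ⟨t - 1, by omega, ?_⟩
          have : t - 1 + 1 = t := by omega
          rw [this]
          exact h3
        · rintro ⟨j, hj, h3⟩
          exact ⟨j + 1, ⟨by omega, by omega⟩, h3⟩
    · rw [List.pairwise_map]
      refine (List.pairwise_lt_range (n := _)).imp_of_mem ?_
      intro a b ha hb hab
      simp only [List.mem_range] at ha hb
      exact le_of_lt (hmono _ _ (by omega) (by omega) (by omega))
  -- the associated data of the path is K
  have hkv : ∀ s, 1 ≤ s → s ≤ m - m' → ∀ i, 1 ≤ i → i ≤ d →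
      kv r m m' (KA r m m' d K) i s = K s i := by
    intro s hs1 hs2 i hi1 hi2
    unfold kv lv
    rw [hsortl i hi1 hi2]
    have hlen : ((List.range (m - m')).map (fun j => Lf r K i (j+1))).length = m - m' := by
      simp
    rw [List.getD_eq_getElem _ _ (by rw [hlen]; omega)]
    rw [List.getElem_map, List.getElem_range]
    have hrw : s - 1 + 1 = s := by omega
    rw [hrw]
    have hlow := hKlow s hs1 hs2 i hi1 hi2
    by_cases htr : K s i < r
    · have hLfv : Lf r K i s = K s i + s - i := if_pos htr
      have hsδ := hdc1 i hi1 hi2 s hs1 hs2 htr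
      rw [hLfv, hvalU _ _ (by omega)]
      have hfv : Kfl r (m-m') K i (K s i + s - i) = s - 1 := by
        unfold Kfl
        have hset : (Finset.Icc 1 (m-m')).filter
            (fun t => K t i < r ∧ K t i + t < (K s i + s - i) + i) = Finset.Icc 1 (s-1) := by
          ext t
          simp only [Finset.mem_filter, Finset.mem_Icc]
          constructor
          · rintro ⟨⟨h1, h2⟩, h3, h4⟩
            refine ⟨h1, ?_⟩
            by_contra h
            push_neg at h
            have := hKle i hi1 hi2 s t hs1 (by omega) h2
            omega
          · rintro ⟨h1, h2⟩
            have := hKle i hi1 hi2 t s h1 (by omega) hs2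
            exact ⟨⟨h1, by omega⟩, by omega, by omega⟩
        rw [hset, Nat.card_Icc]
        omega
      rw [hfv]
      omega
    · push_neg at htr
      have hLfv : Lf r K i s = r + s - i := if_neg (by omega)
      have hδs : Kdel r (m-m') K i < s := by
        by_contra h
        push_neg at h
        have := hdc2 i hi1 hi2 s hs1 hs2 h
        omega
      rw [hLfv, hvalB _ _ (by omega) (by omega)]
      have : r + s - i + i - r = s := by omega
      rw [this]

  refine ⟨KA r m m' d K, ⟨?_, ?_, ?_, ?_, ?_⟩, hkv⟩
  -- (i) range
  · intro s hsm i hi1 hi2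
    by_cases h0 : s + i ≤ r + Kdel r (m-m') K i
    · have := hUlt i hi1 hi2 s h0
      omega
    · rcases le_or_gt (s+i) (m+r-m') with hB | hC
      · rw [hvalB s i h0 hB]
        exact hKrange _ (by omega) (by omega) i hi1 hi2
      · rw [hvalC s i h0 (by omega)]
        omega
  -- (ii) strictly increasing in i
  · intro s hsm i hi1 hid
    have hδm := hδmono i hi1 (by omega)
    by_cases h1 : s + (i+1) ≤ r + Kdel r (m-m') K (i+1)
    · have h0 : s + i ≤ r + Kdel r (m-m') K i := by omega
      rw [hvalU s i h0, hvalU s (i+1) h1]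
      have ha := hfmono_i i hi1 (by omega) s
      have hb := hfles i hi1 (by omega) s
      have hc := hfles (i+1) (by omega) (by omega) s
      omega
    · by_cases h0 : s + i ≤ r + Kdel r (m-m') K i
      · have hlt := hUlt i hi1 (by omega) s h0
        have hge := hBCge (i+1) (by omega) (by omega) s h1
        omega
      · rcases le_or_gt (s+(i+1)) (m+r-m') with hB1 | hC1
        · rw [hvalB s i h0 (by omega), hvalB s (i+1) h1 hB1]
          have hrw : s + (i+1) - r = (s + i - r) + 1 := by omega
          rw [hrw]
          have ha := hKle i hi1 (by omega) (s+i-r) (s+i-r+1) (by omega) (by omega) (by omega)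
          have hb := hKinc (s+i-r+1) (by omega) (by omega) i hi1 hid
          omega
        · rcases le_or_gt (s+i) (m+r-m') with hB0 | hC0
          · rw [hvalB s i h0 hB0, hvalC s (i+1) h1 (by omega)]
            have hh := hKhigh (s+i-r) (by omega) (by omega) i hi1 (by omega)
            omega
          · rw [hvalC s i h0 (by omega), hvalC s (i+1) h1 (by omega)]
            omega
  -- (iii) steps
  · intro s hsm i hi1 hid
    by_cases h1 : s + 1 + i ≤ r + Kdel r (m-m') K i
    · have h0 : s + i ≤ r + Kdel r (m-m') K i := by omega
      rw [hvalU s i h0, hvalU (s+1) i h1]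
      have hsp := hfsplit i s
      have he1 := heqone i hi1 hid s
      have hf0 := hfles i hi1 hid s
      constructor
      · intro _
        omega
      · omega
    · by_cases h0 : s + i ≤ r + Kdel r (m-m') K i
      · have hfd := hfled i s
        have hlt := hUlt i hi1 hid s h0
        have hge1 := hBCge i hi1 hid (s+1) (by omega)
        rw [hvalU s i h0] at hlt ⊢
        constructor
        · intro hcon
          omega
        · omega
      · have hge0 := hBCge i hi1 hid s h0
        rcases le_or_gt (s+i) (m+r-m') with hB0 | hC0
        · rw [hvalB s i h0 hB0] at hge0 ⊢
          rcases le_or_gt (s+1+i) (m+r-m') with hB1 | hC1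
          · rw [hvalB (s+1) i (by omega) hB1]
            have hrw : s + 1 + i - r = (s + i - r) + 1 := by omega
            rw [hrw]
            have ha := hKle i hi1 hid (s+i-r) (s+i-r+1) (by omega) (by omega) (by omega)
            constructor
            · intro hcon
              omega
            · exact ha
          · rw [hvalC (s+1) i (by omega) (by omega)]
            have hh := hKhigh (s+i-r) (by omega) (by omega) i hi1 hid
            constructor
            · intro hcon
              omega
            · omega
        · rw [hvalC s i h0 (by omega)] at hge0 ⊢
          rw [hvalC (s+1) i (by omega) (by omega)]
          constructor
          · intro hcon
            omega
          · omega
  -- (iv) endpoints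
  · intro i hi1 hi2
    constructor
    · rw [hvalU 0 i (by omega)]
      have hf0 : Kfl r (m-m') K i 0 = 0 := by
        unfold Kfl
        rw [Finset.card_eq_zero]
        rw [Finset.eq_empty_iff_forall_notMem]
        intro t ht
        simp only [Finset.mem_filter, Finset.mem_Icc] at ht
        have := hKlow t ht.1.1 ht.1.2 i hi1 hi2
        omega
      rw [hf0]
      omega
    · by_cases hc : i + m' ≤ r
      · have hδ : Kdel r (m-m') K i = m - m' := by
          unfold Kdel
          rw [Finset.filter_true_of_mem ?_, Nat.card_Icc]
          · omega
          · intro t ht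
            simp only [Finset.mem_Icc] at ht
            have := hKbd i hi1 hc t ht.1 ht.2
            omega
        rw [hvalU m i (by omega)]
        have hfm : Kfl r (m-m') K i m = m - m' := by
          unfold Kfl
          rw [Finset.filter_true_of_mem ?_, Nat.card_Icc]
          · omega
          · intro t ht
            simp only [Finset.mem_Icc] at ht
            have := hKbd i hi1 hc t ht.1 ht.2
            exact ⟨by omega, by omega⟩
        rw [hfm]
        unfold rowR
        rw [if_pos (by omega)]
        omega
      · have hd := hdle i
        rw [hvalC m i (by omega) (by omega)]
        unfold rowR
        rw [if_neg (by omega)]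
        omega
  -- (v) bar condition
  · intro s hsm i hi1 hid hge
    have hd2 : i + 1 ≤ d := hid
    have hnU : ¬ (s + 1 + i ≤ r + Kdel r (m-m') K i) := by
      intro h
      have := hUlt i hi1 (by omega) (s+1) h
      omega
    have hδm := hδmono i hi1 hd2
    rcases le_or_gt (s+1+i) (m+r-m') with hB | hC
    · have hv1 : KA r m m' d K (s+1) i = K (s+1+i-r) i := hvalB _ _ hnU hB
      have hv2 : KA r m m' d K s (i+1) = K (s+(i+1)-r) (i+1) := hvalB _ _ (by omega) (by omega)
      have ht1 : 1 ≤ s+1+i-r := by omega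
      have ht2 : s+1+i-r ≤ m - m' := by omega
      have htK : r ≤ K (s+1+i-r) i := by
        rw [hv1] at hge
        exact hge
      have hinc := hKinc (s+1+i-r) ht1 ht2 i hi1 hid
      have hr2 := hKrange (s+1+i-r) ht1 ht2 (i+1) (by omega) hd2
      rw [hv1, hv2]
      have hrw : s + (i+1) - r = s+1+i-r := by omega
      rw [hrw]
      unfold absV
      rw [if_neg (by omega), if_neg (by omega)]
      omega
    · have hv1 : KA r m m' d K (s+1) i = 2*r + i - 1 - d := hvalC _ _ hnU (by omega)
      have hdle2 := hdle (i+1)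
      have hv2 : KA r m m' d K s (i+1) = 2*r + (i+1) - 1 - d := hvalC _ _ (by omega) (by omega)
      rw [hv1, hv2]
      unfold absV
      rw [if_neg (by omega), if_neg (by omega)]
      omega


end CTypeMinors
end
end

section
/- Fix integers m ≥ 1 and 1 ≤ i_n ≤ r. Let Y = (Y_{s,l}) be a family of nonzero complex numbers indexed by 1 ≤ s ≤ m−1, 1 ≤ l ≤ r together with s = m, 1 ≤ l ≤ i_n, with the conventions Y_{s,0} = 1 and Y_{m,ξ} = 1 for ξ > i_n. For each index (s,l) of the family, define Φ_{s,l}(Y) := (Y_{s+1,l−1}Y_{s+2,l−1}⋯Y_{m,l−1})·(Y_{s,l+1}Y_{s+1,l+1}⋯Y_{m,l+1}) / ( Y_{s,l}·(Y_{s+1,l}⋯Y_{m,l})² ) if 1 ≤ l < r, and Φ_{s,r}(Y) := (Y_{s+1,r−1}⋯Y_{m,r−1})² / ( Y_{s,r}·(Y_{s+1,r}⋯Y_{m,r})² ). Then the following identity of matrices in M_{2r}(ℂ) holds: x_{−1}(Y_{1,1})⋯x_{−r}(Y_{1,r})·x_{−1}(Y_{2,1})⋯x_{−r}(Y_{2,r})⋯x_{−1}(Y_{m,1})⋯x_{−i_n}(Y_{m,i_n})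 = D · y_1(Φ_{1,1}(Y))y_2(Φ_{1,2}(Y))⋯y_r(Φ_{1,r}(Y))⋯y_1(Φ_{m,1}(Y))⋯y_{i_n}(Φ_{m,i_n}(Y)), where D := ( ∏_{s=1}^{m−1} ∏_{l=1}^{r} α_l^∨(Y_{s,l})^{−1} ) · ∏_{l=1}^{i_n} α_l^∨(Y_{m,l})^{−1} (a product of commuting diagonal matrices). (This is the factorization underlying the biregular isomorphism x̄^G_𝐢 of Proposition 3.3.) -/
noncomputable section
open Matrix BigOperators

namespace CTypeMinors

/-- `Φ_{s,l}(Y)` from the proof of Proposition 3.3 (formula (3.4)). -/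
def Phi (r m : ℕ) (Y : ℕ → ℕ → ℂ) (s l : ℕ) : ℂ :=
  if l < r then
    ((∏ t ∈ Finset.Icc (s+1) m, Y t (l-1)) * (∏ t ∈ Finset.Icc s m, Y t (l+1))) /
      (Y s l * (∏ t ∈ Finset.Icc (s+1) m, Y t l) ^ 2)
  else
    (∏ t ∈ Finset.Icc (s+1) m, Y t (r-1)) ^ 2 /
      (Y s r * (∏ t ∈ Finset.Icc (s+1) m, Y t r) ^ 2)

/- **Statement 17** (the factorization `x̄^G_𝐢 = x^G_𝐢 ∘ φ` from the proof of
Proposition 3.3, with `a = 1`):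
`x_{-1}(Y_{1,1})⋯x_{-i_n}(Y_{m,i_n}) = D · y_1(Φ_{1,1}(Y))⋯y_{i_n}(Φ_{m,i_n}(Y))`,
where `D` is the product of the `α_l^∨(Y_{s,l})⁻¹`. -/
/-- ratio: `y_i(t) α_j^∨(c) = α_j^∨(c) y_i(t ⬝ rat r i j c)`. -/
def rat (r i j : ℕ) (c : ℂ) : ℂ :=
  if j = i then c^2
  else if j + 1 = i then (if i = r then c⁻¹^2 else c⁻¹)
  else if j = i + 1 then c⁻¹ else 1

lemma oprod_zero {N : ℕ} (g : ℕ → Matrix (Fin N) (Fin N) ℂ) : oprod g 0 = 1 := rfl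

lemma oprod_succ {N : ℕ} (g : ℕ → Matrix (Fin N) (Fin N) ℂ) (n : ℕ) :
    oprod g (n+1) = oprod g n * g (n+1) := by
  simp [oprod, List.range_succ]

lemma oprod_congr {N : ℕ} {g g' : ℕ → Matrix (Fin N) (Fin N) ℂ} {n : ℕ}
    (h : ∀ p, 1 ≤ p → p ≤ n → g p = g' p) : oprod g n = oprod g' n := by
  induction n with
  | zero => rfl
  | succ n ih =>
    rw [oprod_succ, oprod_succ, ih (fun p h1 h2 => h p h1 (by omega)), h (n+1) (by omega) le_rfl]

lemma fMat_mul_alMat {r i j : ℕ} (hi1 : 1 ≤ i) (hir : i ≤ r) (hj1 : 1 ≤ j) (hjr : j ≤ r)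
    {c : ℂ} (hc : c ≠ 0) :
    fMat r i * alMat r j c = rat r i j c • (alMat r j c * fMat r i) := by
  ext k l
  simp only [alMat, fMat, Matrix.mul_diagonal, Matrix.diagonal_mul, Matrix.smul_apply,
    Matrix.of_apply, smul_eq_mul]
  by_cases hP : ((l : ℕ) + 1 = i ∧ (k : ℕ) = i) ∨ ((l : ℕ) + i + 1 = 2*r ∧ (k : ℕ) + i = 2*r)
  · rw [if_pos hP]
    rcases hP with ⟨h1, h2⟩ | ⟨h1, h2⟩ <;>
      unfold rat <;>
      split_ifs <;>
      first
        | rfl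
        | (exfalso; omega)
        | (field_simp; try ring)
  · rw [if_neg hP]; ring
lemma comm_y_al {r i j : ℕ} (hi1 : 1 ≤ i) (hir : i ≤ r) (hj1 : 1 ≤ j) (hjr : j ≤ r)
    {c : ℂ} (hc : c ≠ 0) (t : ℂ) :
    yMat r i t * alMat r j c = alMat r j c * yMat r i (t * rat r i j c) := by
  unfold yMat
  rw [add_mul, mul_add, one_mul, mul_one, smul_mul_assoc, fMat_mul_alMat hi1 hir hj1 hjr hc,
    smul_smul, mul_smul_comm]

lemma alMat_mul_alMat_inv {r j : ℕ} {c : ℂ} (hc : c ≠ 0) :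
    alMat r j c * alMat r j c⁻¹ = 1 := by
  unfold alMat
  rw [Matrix.diagonal_mul_diagonal]
  have h : (fun k : Fin (2*r) =>
      (if (k : ℕ) + 1 = j ∨ (k : ℕ) + j + 1 = 2*r then c
        else if (k : ℕ) = j ∨ (k : ℕ) + j = 2*r then c⁻¹ else 1) *
      (if (k : ℕ) + 1 = j ∨ (k : ℕ) + j + 1 = 2*r then c⁻¹
        else if (k : ℕ) = j ∨ (k : ℕ) + j = 2*r then c⁻¹⁻¹ else 1)) = fun _ => (1 : ℂ) := by
    funext k
    split_ifs <;> simp [hc, mul_inv_cancel₀, inv_mul_cancel₀]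
  rw [h, Matrix.diagonal_one]

lemma alMat_inv {r j : ℕ} {c : ℂ} (hc : c ≠ 0) :
    (alMat r j c)⁻¹ = alMat r j c⁻¹ :=
  Matrix.inv_eq_right_inv (alMat_mul_alMat_inv hc)

lemma move_oprod {r : ℕ} (g : ℕ → ℕ) (t : ℕ → ℂ) {j : ℕ} {c : ℂ}
    (hj1 : 1 ≤ j) (hjr : j ≤ r) (hc : c ≠ 0) :
    ∀ n, (∀ p, 1 ≤ p → p ≤ n → 1 ≤ g p ∧ g p ≤ r) →
    oprod (fun p => yMat r (g p) (t p)) n * alMat r j c =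
      alMat r j c * oprod (fun p => yMat r (g p) (t p * rat r (g p) j c)) n := by
  intro n
  induction n with
  | zero => simp [oprod_zero]
  | succ n ih =>
    intro h
    have hg := h (n+1) (by omega) le_rfl
    rw [oprod_succ, oprod_succ, mul_assoc,
      comm_y_al hg.1 hg.2 hj1 hjr hc, ← mul_assoc,
      ih (fun p h1 h2 => h p h1 (by omega)), mul_assoc]

lemma move_nested {r : ℕ} (T : ℕ → ℕ → ℂ) (len : ℕ → ℕ) (hlen : ∀ s, len s ≤ r)
    {j : ℕ} {c : ℂ} (hj1 : 1 ≤ j) (hjr : j ≤ r) (hc : c ≠ 0) (M : ℕ) :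
    oprod (fun s => oprod (fun l => yMat r l (T s l)) (len s)) M * alMat r j c =
      alMat r j c *
        oprod (fun s => oprod (fun l => yMat r l (T s l * rat r l j c)) (len s)) M := by
  induction M with
  | zero => simp [oprod_zero]
  | succ M ih =>
    rw [oprod_succ, oprod_succ, mul_assoc,
      move_oprod (fun l => l) (T (M+1)) hj1 hjr hc (len (M+1))
        (fun p h1 h2 => ⟨h1, le_trans h2 (hlen (M+1))⟩),
      ← mul_assoc, ih, mul_assoc]
/-- The update of `Y` setting `Y m k := 1`. -/
def upd (Y : ℕ → ℕ → ℂ) (m k : ℕ) : ℕ → ℕ → ℂ :=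
  fun a b => if a = m ∧ b = k then 1 else Y a b

section PhiLemmas

variable {r m k : ℕ} {Y : ℕ → ℕ → ℂ}

lemma prod_upd_ne (a x : ℕ) (hx : x ≠ k) :
    (∏ t ∈ Finset.Icc a m, upd Y m k t x) = ∏ t ∈ Finset.Icc a m, Y t x :=
  Finset.prod_congr rfl fun t _ => by simp [upd, hx]

lemma prod_upd_eq (hm : 1 ≤ m) {a : ℕ} (ha : a ≤ m) :
    (∏ t ∈ Finset.Icc a m, Y t k) = (∏ t ∈ Finset.Icc a m, upd Y m k t k) * Y m k := by
  obtain ⟨b, rfl⟩ : ∃ b, m = b + 1 := ⟨m - 1, by omega⟩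
  rw [Finset.prod_Icc_succ_top ha, Finset.prod_Icc_succ_top ha]
  have h1 : (∏ t ∈ Finset.Icc a b, upd Y (b+1) k t k) = ∏ t ∈ Finset.Icc a b, Y t k :=
    Finset.prod_congr rfl fun t ht => by
      have := (Finset.mem_Icc.1 ht).2
      simp only [upd]
      rw [if_neg (by omega)]
  rw [h1]
  simp [upd]

lemma prod_Y_eq_prod_upd (hm : 1 ≤ m) :
    ∀ a x, (∏ t ∈ Finset.Icc a m, Y t x) =
      (∏ t ∈ Finset.Icc a m, upd Y m k t x) * (if x = k ∧ a ≤ m then Y m k else 1) := by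
  intro a x
  by_cases hx : x = k
  · subst hx
    by_cases ham : a ≤ m
    · rw [prod_upd_eq hm ham, if_pos ⟨rfl, ham⟩]
    · have he : Finset.Icc a m = ∅ := Finset.Icc_eq_empty (by omega)
      rw [he]
      simp [ham]
  · rw [prod_upd_ne _ _ hx, if_neg (by tauto), mul_one]

lemma upd_ne_zero (hY0 : ∀ s, Y s 0 = 1)
    (hYne : ∀ s l, 1 ≤ s → s ≤ m → 1 ≤ l → l ≤ r → Y s l ≠ 0)
    {a x : ℕ} (ha1 : 1 ≤ a) (ham : a ≤ m) (hx : x ≤ r) : upd Y m k a x ≠ 0 := by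
  unfold upd
  split_ifs with h
  · exact one_ne_zero
  · rcases Nat.eq_zero_or_pos x with h0 | h0
    · subst h0; rw [hY0]; exact one_ne_zero
    · exact hYne a x ha1 ham h0 hx

lemma prod_upd_ne_zero (hY0 : ∀ s, Y s 0 = 1)
    (hYne : ∀ s l, 1 ≤ s → s ≤ m → 1 ≤ l → l ≤ r → Y s l ≠ 0)
    {a x : ℕ} (ha1 : 1 ≤ a) (hx : x ≤ r) :
    (∏ t ∈ Finset.Icc a m, upd Y m k t x) ≠ 0 := by
  rw [Finset.prod_ne_zero_iff]
  intro t ht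
  have h := Finset.mem_Icc.1 ht
  exact upd_ne_zero hY0 hYne (by omega) h.2 hx


end PhiLemmas

set_option maxHeartbeats 1000000 in
lemma phiA {r m k : ℕ} {Y : ℕ → ℕ → ℂ} (hr : 2 ≤ r) (hm : 1 ≤ m) (hk1 : 1 ≤ k) (hkr : k ≤ r)
    (hY0 : ∀ s, Y s 0 = 1)
    (hYne : ∀ s l, 1 ≤ s → s ≤ m → 1 ≤ l → l ≤ r → Y s l ≠ 0)
    {s l : ℕ} (hs1 : 1 ≤ s) (hsm : s ≤ m) (hl1 : 1 ≤ l) (hlr : l ≤ r)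
    (hpos : s < m ∨ l < k) :
    Phi r m Y s l = Phi r m (upd Y m k) s l * rat r l k (Y m k)⁻¹ := by
  have hYmk : Y m k ≠ 0 := hYne m k hm le_rfl hk1 hkr
  unfold Phi
  by_cases hlr2 : l < r
  · have hYs : Y s l = upd Y m k s l := by
      simp only [upd]; rw [if_neg (by omega)]
    have hYs' : upd Y m k s l ≠ 0 := upd_ne_zero hY0 hYne hs1 hsm hlr
    rw [if_pos hlr2, if_pos hlr2,
      prod_Y_eq_prod_upd (k := k) hm (s+1) (l-1), prod_Y_eq_prod_upd (k := k) hm s (l+1),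
      prod_Y_eq_prod_upd (k := k) hm (s+1) l, hYs]
    have h1 := prod_upd_ne_zero (r := r) (m := m) (k := k) (Y := Y) hY0 hYne
      (a := s+1) (x := l-1) (by omega) (by omega)
    have h2 := prod_upd_ne_zero (r := r) (m := m) (k := k) (Y := Y) hY0 hYne
      (a := s) (x := l+1) (by omega) (by omega)
    have h3 := prod_upd_ne_zero (r := r) (m := m) (k := k) (Y := Y) hY0 hYne
      (a := s+1) (x := l) (by omega) (by omega)
    unfold rat
    split_ifs <;> first
      | (exfalso; omega)
      | (field_simp; ring1)
      | ring1
      | (simp only [inv_inv]; ring1)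
  · have hl : l = r := by omega
    have hYs : Y s r = upd Y m k s r := by
      simp only [upd]; rw [if_neg (by omega)]
    have hYs' : upd Y m k s r ≠ 0 := upd_ne_zero hY0 hYne hs1 hsm (le_refl r)
    rw [if_neg hlr2, if_neg hlr2, hl,
      prod_Y_eq_prod_upd (k := k) hm (s+1) (r-1), prod_Y_eq_prod_upd (k := k) hm (s+1) r, hYs]
    have h1 := prod_upd_ne_zero (r := r) (m := m) (k := k) (Y := Y) hY0 hYne
      (a := s+1) (x := r-1) (by omega) (by omega)
    have h3 := prod_upd_ne_zero (r := r) (m := m) (k := k) (Y := Y) hY0 hYne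
      (a := s+1) (x := r) (by omega) (by omega)
    unfold rat
    split_ifs <;> first
      | (exfalso; omega)
      | (field_simp; ring1)
      | ring1
      | (simp only [inv_inv]; ring1)
lemma phiB {r m k : ℕ} {Y : ℕ → ℕ → ℂ} (hm : 1 ≤ m) (hk1 : 1 ≤ k) (hkr : k ≤ r)
    (hYm : ∀ l, k < l → l ≤ r → Y m l = 1) :
    Phi r m Y m k = (Y m k)⁻¹ := by
  unfold Phi
  have h1 : Finset.Icc (m+1) m = ∅ := Finset.Icc_eq_empty (by omega)
  have h2 : Finset.Icc m m = {m} := Finset.Icc_self m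
  by_cases hkr' : k < r
  · rw [if_pos hkr', h1, h2]
    simp [hYm (k+1) (by omega) (by omega)]
  · have hk : k = r := by omega
    subst hk
    rw [if_neg hkr', h1]
    simp

lemma phi_drop {r m' : ℕ} {Y : ℕ → ℕ → ℂ} (hY1 : ∀ x, x ≤ r → Y (m'+1) x = 1)
    {s l : ℕ} (hsm : s ≤ m') (hl1 : 1 ≤ l) (hlr : l ≤ r) :
    Phi r (m'+1) Y s l = Phi r m' Y s l := by
  unfold Phi
  by_cases h : l < r
  · rw [if_pos h, if_pos h,
      Finset.prod_Icc_succ_top (show s+1 ≤ m'+1 by omega) (fun t => Y t (l-1)),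
      Finset.prod_Icc_succ_top (show s ≤ m'+1 by omega) (fun t => Y t (l+1)),
      Finset.prod_Icc_succ_top (show s+1 ≤ m'+1 by omega) (fun t => Y t l),
      hY1 (l-1) (by omega), hY1 (l+1) (by omega), hY1 l (by omega),
      mul_one, mul_one, mul_one]
  · rw [if_neg h, if_neg h,
      Finset.prod_Icc_succ_top (show s+1 ≤ m'+1 by omega) (fun t => Y t (r-1)),
      Finset.prod_Icc_succ_top (show s+1 ≤ m'+1 by omega) (fun t => Y t r),
      hY1 (r-1) (by omega), hY1 r le_rfl, mul_one, mul_one]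
lemma split_top {r m' d : ℕ} (g : ℕ → ℕ → Matrix (Fin (2*r)) (Fin (2*r)) ℂ) :
    oprod (fun s => oprod (fun l => g s l) (if s = m'+1 then d+1 else r)) (m'+1)
    = oprod (fun s => oprod (fun l => g s l) (if s = m'+1 then d+1 else r)) m'
      * (oprod (fun l => g (m'+1) l) d * g (m'+1) (d+1)) := by
  rw [oprod_succ]
  simp only [↓reduceIte, oprod_succ]

lemma split_top' {r m' d : ℕ} (g : ℕ → ℕ → Matrix (Fin (2*r)) (Fin (2*r)) ℂ) :
    oprod (fun s => oprod (fun l => g s l) (if s = m'+1 then d else r)) (m'+1)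
    = oprod (fun s => oprod (fun l => g s l) (if s = m'+1 then d else r)) m'
      * oprod (fun l => g (m'+1) l) d := by
  rw [oprod_succ]
  simp only [↓reduceIte]

lemma aux_main (r : ℕ) (hr : 2 ≤ r) :
    ∀ m, 1 ≤ m → ∀ inn, inn ≤ r → ∀ Y : ℕ → ℕ → ℂ,
      (∀ s, Y s 0 = 1) → (∀ l, inn < l → l ≤ r → Y m l = 1) →
      (∀ s l, 1 ≤ s → s ≤ m → 1 ≤ l → l ≤ r → Y s l ≠ 0) →
      oprod (fun s => oprod (fun l => xmMat r l (Y s l)) (if s = m then inn else r)) m =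
      (oprod (fun s => oprod (fun l => alMat r l (Y s l)⁻¹) (if s = m then inn else r)) m) *
        oprod (fun s => oprod (fun l => yMat r l (Phi r m Y s l)) (if s = m then inn else r)) m := by
  intro m
  induction m with
  | zero => intro h; exact absurd h (by omega)
  | succ m' ihm =>
    intro _ inn
    induction inn with
    | zero =>
      intro _ Y hY0 hYm hYne
      have hY1 : ∀ x, x ≤ r → Y (m'+1) x = 1 := by
        intro x hx
        rcases Nat.eq_zero_or_pos x with h0 | h0
        · subst h0; exact hY0 _
        · exact hYm x h0 hx
      rcases Nat.eq_zero_or_pos m' with hm0 | hm0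
      · subst hm0
        simp [oprod, List.range_succ]
      · have key := ihm hm0 r le_rfl Y hY0 (fun l h1 h2 => absurd (lt_of_lt_of_le h1 h2) (lt_irrefl r))
          (fun s l h1 h2 h3 h4 => hYne s l h1 (by omega) h3 h4)
        simp only [ite_self] at key
        rw [split_top' (fun s l => xmMat r l (Y s l)),
          split_top' (fun s l => alMat r l (Y s l)⁻¹),
          split_top' (fun s l => yMat r l (Phi r (m'+1) Y s l)),
          oprod_zero, oprod_zero, oprod_zero, mul_one, mul_one, mul_one]
        calc oprod (fun s => oprod (fun l => xmMat r l (Y s l)) (if s = m'+1 then 0 else r)) m'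
            = oprod (fun s => oprod (fun l => xmMat r l (Y s l)) r) m' :=
              oprod_congr (fun p h1 h2 => by rw [if_neg (by omega)])
          _ = (oprod (fun s => oprod (fun l => alMat r l (Y s l)⁻¹) r) m') *
                oprod (fun s => oprod (fun l => yMat r l (Phi r m' Y s l)) r) m' := key
          _ = (oprod (fun s => oprod (fun l => alMat r l (Y s l)⁻¹) (if s = m'+1 then 0 else r)) m') *
                oprod (fun s => oprod (fun l => yMat r l (Phi r (m'+1) Y s l)) (if s = m'+1 then 0 else r)) m' := by
              refine congrArg₂ (· * ·) ?_ ?_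
              · exact oprod_congr (fun p h1 h2 => by rw [if_neg (by omega)])
              · refine oprod_congr (fun p h1 h2 => ?_)
                rw [if_neg (by omega)]
                exact oprod_congr (fun l hl1 hl2 =>
                  by rw [phi_drop hY1 (by omega) hl1 hl2])
    | succ inn' ihinn =>
      intro hinnr Y hY0 hYm hYne
      have hinnr' : inn' + 1 ≤ r := hinnr
      set t := Y (m'+1) (inn'+1) with ht
      have htne : t ≠ 0 := hYne (m'+1) (inn'+1) (by omega) le_rfl (by omega) hinnr'
      have htinv : t⁻¹ ≠ 0 := inv_ne_zero htne
      set Y' := upd Y (m'+1) (inn'+1) with hY'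
      have hupd_eq : ∀ a b, ¬(a = m'+1 ∧ b = (inn'+1)) → Y' a b = Y a b := by
        intro a b h; simp only [hY', upd]; rw [if_neg h]
      have hY0' : ∀ s, Y' s 0 = 1 := by
        intro s
        rw [hupd_eq s 0 (by omega), hY0]
      have hYm' : ∀ l, inn' < l → l ≤ r → Y' (m'+1) l = 1 := by
        intro l h1 h2
        by_cases hlk : l = (inn'+1)
        · subst hlk; simp [hY', upd]
        · rw [hupd_eq _ _ (by tauto)]
          exact hYm l (by omega) h2
      have hYne' : ∀ s l, 1 ≤ s → s ≤ m'+1 → 1 ≤ l → l ≤ r → Y' s l ≠ 0 := by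
        intro s l h1 h2 h3 h4
        by_cases hc : s = m'+1 ∧ l = (inn'+1)
        · simp [hY', upd, hc]
        · rw [hupd_eq _ _ hc]; exact hYne s l h1 h2 h3 h4
      have key := ihinn (by omega) Y' hY0' hYm' hYne'
      -- Claim 1 : LHS decomposition
      have c1 : oprod (fun s => oprod (fun l => xmMat r l (Y s l)) (if s = m'+1 then (inn'+1) else r)) (m'+1)
          = oprod (fun s => oprod (fun l => xmMat r l (Y' s l)) (if s = m'+1 then inn' else r)) (m'+1)
            * xmMat r (inn'+1) t := by
        rw [split_top (fun s l => xmMat r l (Y s l)),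
          split_top' (fun s l => xmMat r l (Y' s l)), ← mul_assoc]
        congr 2
        · refine oprod_congr (fun p h1 h2 => ?_)
          rw [if_neg (by omega), if_neg (by omega)]
          exact oprod_congr (fun l hl1 hl2 => by rw [hupd_eq p l (by omega)])
        · exact oprod_congr (fun l hl1 hl2 => by rw [hupd_eq _ _ (by omega)])
      -- Claim 2 : H decomposition
      have c2 : oprod (fun s => oprod (fun l => alMat r l (Y s l)⁻¹) (if s = m'+1 then (inn'+1) else r)) (m'+1)
          = oprod (fun s => oprod (fun l => alMat r l (Y' s l)⁻¹) (if s = m'+1 then inn' else r)) (m'+1)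
            * alMat r (inn'+1) t⁻¹ := by
        rw [split_top (fun s l => alMat r l (Y s l)⁻¹),
          split_top' (fun s l => alMat r l (Y' s l)⁻¹), ← mul_assoc]
        congr 2
        · refine oprod_congr (fun p h1 h2 => ?_)
          rw [if_neg (by omega), if_neg (by omega)]
          exact oprod_congr (fun l hl1 hl2 => by rw [hupd_eq p l (by omega)])
        · exact oprod_congr (fun l hl1 hl2 => by rw [hupd_eq _ _ (by omega)])
      -- Claim 3 : moving the alpha factor through the y's
      have c3 : (oprod (fun s => oprod (fun l => yMat r l (Phi r (m'+1) Y' s l)) (if s = m'+1 then inn' else r)) (m'+1))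
            * alMat r (inn'+1) t⁻¹
          = alMat r (inn'+1) t⁻¹ *
            oprod (fun s => oprod (fun l => yMat r l (Phi r (m'+1) Y s l)) (if s = m'+1 then inn' else r)) (m'+1) := by
        rw [move_nested (fun s l => Phi r (m'+1) Y' s l) (fun s => if s = m'+1 then inn' else r)
          (fun s => by split_ifs <;> omega) (by omega) hinnr' htinv (m'+1)]
        congr 1
        refine oprod_congr (fun p h1 h2 => ?_)
        refine oprod_congr (fun l hl1 hl2 => ?_)
        have hcase : (p = m'+1 ∧ l ≤ inn') ∨ (p ≠ m'+1 ∧ l ≤ r) := by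
          by_cases hp : p = m'+1
          · left; refine ⟨hp, ?_⟩; simpa [hp] using hl2
          · right; refine ⟨hp, ?_⟩; simpa [hp] using hl2
        have hl2' : l ≤ r := by rcases hcase with ⟨_, h⟩ | ⟨_, h⟩ <;> omega
        have hpos : p < m'+1 ∨ l < (inn'+1) := by
          rcases hcase with ⟨_, h⟩ | ⟨hp, _⟩
          · right; omega
          · left; omega
        rw [← phiA hr (by omega) (by omega) hinnr' hY0 hYne h1 h2 hl1 hl2' hpos]
      -- final y at position (m'+1, (inn'+1))
      have c4 : t * rat r (inn'+1) (inn'+1) t⁻¹ = Phi r (m'+1) Y (m'+1) (inn'+1) := by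
        rw [phiB (by omega) (by omega) hinnr' hYm]
        unfold rat
        rw [if_pos rfl]
        field_simp
        rw [← ht]
        field_simp
      calc oprod (fun s => oprod (fun l => xmMat r l (Y s l)) (if s = m'+1 then (inn'+1) else r)) (m'+1)
          = oprod (fun s => oprod (fun l => xmMat r l (Y' s l)) (if s = m'+1 then inn' else r)) (m'+1)
            * (yMat r (inn'+1) t * alMat r (inn'+1) t⁻¹) := c1
        _ = ((oprod (fun s => oprod (fun l => alMat r l (Y' s l)⁻¹) (if s = m'+1 then inn' else r)) (m'+1)) *
              oprod (fun s => oprod (fun l => yMat r l (Phi r (m'+1) Y' s l)) (if s = m'+1 then inn' else r)) (m'+1))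
            * (yMat r (inn'+1) t * alMat r (inn'+1) t⁻¹) := by rw [key]
        _ = (oprod (fun s => oprod (fun l => alMat r l (Y' s l)⁻¹) (if s = m'+1 then inn' else r)) (m'+1)) *
            ((oprod (fun s => oprod (fun l => yMat r l (Phi r (m'+1) Y' s l)) (if s = m'+1 then inn' else r)) (m'+1)
              * alMat r (inn'+1) t⁻¹) * yMat r (inn'+1) (t * rat r (inn'+1) (inn'+1) t⁻¹)) := by
            rw [comm_y_al (by omega) hinnr' (by omega) hinnr' htinv t]
            noncomm_ring
        _ = (oprod (fun s => oprod (fun l => alMat r l (Y' s l)⁻¹) (if s = m'+1 then inn' else r)) (m'+1)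
              * alMat r (inn'+1) t⁻¹) *
            (oprod (fun s => oprod (fun l => yMat r l (Phi r (m'+1) Y s l)) (if s = m'+1 then inn' else r)) (m'+1)
              * yMat r (inn'+1) (Phi r (m'+1) Y (m'+1) (inn'+1))) := by
            rw [c3, c4]
            noncomm_ring
        _ = (oprod (fun s => oprod (fun l => alMat r l (Y s l)⁻¹) (if s = m'+1 then (inn'+1) else r)) (m'+1)) *
            oprod (fun s => oprod (fun l => yMat r l (Phi r (m'+1) Y s l)) (if s = m'+1 then (inn'+1) else r)) (m'+1) := by
            have e : oprod (fun s => oprod (fun l => yMat r l (Phi r (m'+1) Y s l))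
                  (if s = m'+1 then inn' else r)) m'
                = oprod (fun s => oprod (fun l => yMat r l (Phi r (m'+1) Y s l))
                  (if s = m'+1 then inn'+1 else r)) m' :=
              oprod_congr (fun p h1 h2 => by rw [if_neg (by omega), if_neg (by omega)])
            rw [c2, split_top (fun s l => yMat r l (Phi r (m'+1) Y s l)),
              split_top' (fun s l => yMat r l (Phi r (m'+1) Y s l)), e, mul_assoc]
            noncomm_ring
theorem factorization_xL_eq_D_mul_y
    (r m inn : ℕ) (hr : 2 ≤ r) (hm : 1 ≤ m) (hmr : m ≤ r)
    (hinn1 : 1 ≤ inn) (hinnr : inn ≤ r)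
    (Y : ℕ → ℕ → ℂ)
    (hY0 : ∀ s, Y s 0 = 1) (hYm : ∀ l, inn < l → Y m l = 1)
    (hYne : ∀ s l, 1 ≤ s → s ≤ m → 1 ≤ l → l ≤ r → Y s l ≠ 0) :
    oprod (fun s => oprod (fun l => xmMat r l (Y s l)) (if s = m then inn else r)) m =
    (oprod (fun s => oprod (fun l => (alMat r l (Y s l))⁻¹) (if s = m then inn else r)) m) *
      oprod (fun s =>
        oprod (fun l => yMat r l (Phi r m Y s l)) (if s = m then inn else r)) m := by
  rw [aux_main r hr m hm inn hinnr Y hY0 (fun l h1 _ => hYm l h1) hYne]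
  congr 1
  refine oprod_congr (fun p h1 h2 => ?_)
  refine oprod_congr (fun l hl1 hl2 => ?_)
  have hlr : l ≤ r := by split_ifs at hl2 <;> omega
  rw [alMat_inv (hYne p l h1 h2 hl1 hlr)]

end CTypeMinors
end
end
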